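/- arXiv:1104.1960 — 2 statements merged into one kernel-verified Lean document; each statement's English description precedes it below -/
import Mathlib

section
/- Let 1 ≤ p < ∞ and 1/p + 1/p' = 1. There is a constant 0 < C < ∞, depending only on p, n and the uniform duality constant, such that for all sequences f = (f_Q)_{Q∈𝒟} with f_Q ∈ X_Q and g = (g_Q)_{Q∈𝒟} with g_Q ∈ Y_Q, one has ∑_{Q∈𝒟} |⟨f_Q, g_Q⟩| ≤ C ‖N_X f‖_{L_p(ℝ^n)} ‖C_Y g‖_{L_{p'}(ℝ^n)}. -/
open MeasureTheory ENNReal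

noncomputable section

/-- Index set for dyadic cubes in `ℝⁿ`: scale `j : ℤ` and position `k : ℤⁿ`. -/
abbrev DIdx (n : ℕ) := ℤ × (Fin n → ℤ)

/-- The open dyadic cube `2⁻ʲ(0,1)ⁿ + 2⁻ʲ k`. -/
def dcube (n : ℕ) (Q : DIdx n) : Set (EuclideanSpace ℝ (Fin n)) :=
  {x | ∀ i, (2:ℝ) ^ (-Q.1) * (Q.2 i : ℝ) < x i ∧ x i < (2:ℝ) ^ (-Q.1) * ((Q.2 i : ℝ) + 1)}

/-- The `L_p` norm (valued in `ℝ≥0∞`) of an `ℝ≥0∞`-valued function. -/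
def eLp {α : Type*} [MeasurableSpace α] (p : ℝ≥0∞) (F : α → ℝ≥0∞) (μ : Measure α) : ℝ≥0∞ :=
  if p = ∞ then essSup F μ else (∫⁻ x, F x ^ p.toReal ∂μ) ^ p.toReal⁻¹

/-- The non-tangential maximal function `N_X f(x) = sup_{Q ∋ x} ‖f_Q‖`. -/
def NX {n : ℕ} {X : DIdx n → Type*} [∀ Q, NormedAddCommGroup (X Q)]
    (f : ∀ Q, X Q) (x : EuclideanSpace ℝ (Fin n)) : ℝ≥0∞ :=
  ⨆ Q, ⨆ (_ : x ∈ dcube n Q), (‖f Q‖₊ : ℝ≥0∞)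

/-- The Carleson functional `C_Y g(x) = sup_{Q ∋ x} |Q|⁻¹ ∑_{R ⊆ Q} ‖g_R‖`. -/
def CY {n : ℕ} {Y : DIdx n → Type*} [∀ Q, NormedAddCommGroup (Y Q)]
    (g : ∀ Q, Y Q) (x : EuclideanSpace ℝ (Fin n)) : ℝ≥0∞ :=
  ⨆ Q, ⨆ (_ : x ∈ dcube n Q),
    (volume (dcube n Q))⁻¹ * ∑' R : {R : DIdx n // dcube n R ⊆ dcube n Q}, (‖g R.1‖₊ : ℝ≥0∞)

/-- A duality between Banach spaces, with constant `C`. -/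
def IsDuality {X Y : Type*} [NormedAddCommGroup X] [NormedSpace ℝ X]
    [NormedAddCommGroup Y] [NormedSpace ℝ Y]
    (pair : X →ₗ[ℝ] Y →ₗ[ℝ] ℝ) (C : ℝ) : Prop :=
  (∀ f g, |pair f g| ≤ C * ‖f‖ * ‖g‖) ∧
  (∀ f, ‖f‖ ≤ C * sSup ((fun g => pair f g) '' {g | ‖g‖ = 1})) ∧
  (∀ g, ‖g‖ ≤ C * sSup ((fun f => pair f g) '' {f | ‖f‖ = 1}))

variable {n : ℕ}

lemma dcube_eq_pi (Q : DIdx n) : dcube n Q = (MeasurableEquiv.toLp 2 (Fin n → ℝ)).symm ⁻¹'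
    (Set.univ.pi fun i => Set.Ioo ((2:ℝ)^(-Q.1) * (Q.2 i : ℝ)) ((2:ℝ)^(-Q.1) * ((Q.2 i : ℝ) + 1))) := by
  ext x
  simp [dcube, Set.mem_pi, MeasurableEquiv.toLp, Set.mem_Ioo]; rfl

lemma measurable_dcube (Q : DIdx n) : MeasurableSet (dcube n Q) := by
  rw [dcube_eq_pi]
  exact (MeasurableEquiv.toLp 2 (Fin n → ℝ)).symm.measurable
    (MeasurableSet.univ_pi fun i => measurableSet_Ioo)

lemma volume_dcube (Q : DIdx n) :
    volume (dcube n Q) = (ENNReal.ofReal ((2:ℝ)^(-Q.1)))^n := by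
  rw [dcube_eq_pi, (EuclideanSpace.volume_preserving_symm_measurableEquiv_toLp (Fin n)).measure_preimage
    (MeasurableSet.univ_pi fun i => measurableSet_Ioo).nullMeasurableSet]
  rw [volume_pi_pi]
  have h : ∀ i : Fin n, volume (Set.Ioo ((2:ℝ)^(-Q.1) * (Q.2 i : ℝ)) ((2:ℝ)^(-Q.1) * ((Q.2 i : ℝ) + 1)))
      = ENNReal.ofReal ((2:ℝ)^(-Q.1)) := by
    intro i
    rw [Real.volume_Ioo]
    congr 1
    ring
  rw [Finset.prod_congr rfl (fun i _ => h i), Finset.prod_const, Finset.card_univ,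
    Fintype.card_fin]

lemma dcube_vol_ne_zero (Q : DIdx n) : volume (dcube n Q) ≠ 0 := by
  rw [volume_dcube]
  positivity

lemma dcube_vol_ne_top (Q : DIdx n) : volume (dcube n Q) ≠ ⊤ := by
  rw [volume_dcube]
  exact pow_ne_top ofReal_ne_top

lemma dcube_nonempty (Q : DIdx n) : (dcube n Q).Nonempty := by
  refine ⟨(WithLp.toLp 2 (fun i => (2:ℝ)^(-Q.1) * ((Q.2 i : ℝ) + 1/2)) : EuclideanSpace ℝ (Fin n)), fun i => ?_⟩
  constructor <;> · have : (0:ℝ) < (2:ℝ)^(-Q.1) := by positivity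
                    nlinarith

lemma key1d (j i k m : ℤ) (hji : j ≤ i) (t y : ℝ)
    (h1 : (2:ℝ)^(-j)*k < t) (h2 : t < (2:ℝ)^(-j)*(k+1))
    (h3 : (2:ℝ)^(-i)*m < t) (h4 : t < (2:ℝ)^(-i)*(m+1))
    (h5 : (2:ℝ)^(-i)*m < y) (h6 : y < (2:ℝ)^(-i)*(m+1)) :
    (2:ℝ)^(-j)*k < y ∧ y < (2:ℝ)^(-j)*(k+1) := by
  set c : ℝ := (2:ℝ)^(-i) with hc
  have hcpos : 0 < c := by positivity
  set D : ℤ := 2^((i-j).toNat) with hD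
  have hpow : (2:ℝ)^(-j) = c * (D:ℝ) := by
    rw [hc, hD]
    push_cast
    rw [← zpow_natCast (2:ℝ) (i-j).toNat, Int.toNat_of_nonneg (by omega),
      ← zpow_add₀ (by norm_num : (2:ℝ) ≠ 0)]
    congr 1
    omega
  have e1 : c * ((k*D : ℤ):ℝ) = (2:ℝ)^(-j) * k := by rw [hpow]; push_cast; ring
  have e2 : c * (((k+1)*D : ℤ):ℝ) = (2:ℝ)^(-j) * (k+1) := by rw [hpow]; push_cast; ring
  have h1' : c * ((k*D : ℤ):ℝ) < t := by rw [e1]; exact h1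
  have h2' : t < c * (((k+1)*D : ℤ):ℝ) := by rw [e2]; exact h2
  have hi1 : ((k*D : ℤ):ℝ) < ((m:ℝ) + 1) := lt_of_mul_lt_mul_left (h1'.trans h4) hcpos.le
  have hi2 : (m:ℝ) < (((k+1)*D : ℤ):ℝ) := lt_of_mul_lt_mul_left (h3.trans h2') hcpos.le
  have hz1 : k*D ≤ m := by exact_mod_cast Int.lt_add_one_iff.mp (by exact_mod_cast hi1)
  have hz2 : m + 1 ≤ (k+1)*D := by
    have : m < (k+1)*D := by exact_mod_cast hi2
    omega
  constructor
  · rw [← e1]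
    calc c * ((k*D : ℤ):ℝ) ≤ c * m := by
          have : ((k*D:ℤ):ℝ) ≤ (m:ℝ) := by exact_mod_cast hz1
          exact mul_le_mul_of_nonneg_left this hcpos.le
      _ < y := h5
  · rw [← e2]
    calc y < c * ((m:ℝ)+1) := h6
      _ ≤ c * (((k+1)*D : ℤ):ℝ) := by
          have : ((m:ℝ)+1) ≤ (((k+1)*D:ℤ):ℝ) := by exact_mod_cast hz2
          exact mul_le_mul_of_nonneg_left this hcpos.le

lemma dcube_subset_of_le {Q R : DIdx n} (hle : Q.1 ≤ R.1) {x : EuclideanSpace ℝ (Fin n)}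
    (hxQ : x ∈ dcube n Q) (hxR : x ∈ dcube n R) : dcube n R ⊆ dcube n Q := by
  intro y hy i
  exact key1d Q.1 R.1 (Q.2 i) (R.2 i) hle (x i) (y i) (hxQ i).1 (hxQ i).2 (hxR i).1 (hxR i).2
    (hy i).1 (hy i).2

lemma dcube_nested {Q R : DIdx n} (h : (dcube n Q ∩ dcube n R).Nonempty) :
    dcube n Q ⊆ dcube n R ∨ dcube n R ⊆ dcube n Q := by
  obtain ⟨x, hxQ, hxR⟩ := h
  rcases le_total Q.1 R.1 with h' | h'
  · exact Or.inr (dcube_subset_of_le h' hxQ hxR)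
  · exact Or.inl (dcube_subset_of_le h' hxR hxQ)

lemma single_cube_bound (b : DIdx n → ℝ≥0∞) (Cf : EuclideanSpace ℝ (Fin n) → ℝ≥0∞)
    (hC : ∀ Q : DIdx n, ∀ x ∈ dcube n Q,
      (volume (dcube n Q))⁻¹ * ∑' R : {R : DIdx n // dcube n R ⊆ dcube n Q}, b R ≤ Cf x)
    (Q : DIdx n) :
    ∑' R : {R : DIdx n // dcube n R ⊆ dcube n Q}, b R ≤ ∫⁻ x in dcube n Q, Cf x := by
  set S := ∑' R : {R : DIdx n // dcube n R ⊆ dcube n Q}, b R with hS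
  have h1 : (volume (dcube n Q))⁻¹ * S * volume (dcube n Q) ≤ ∫⁻ x in dcube n Q, Cf x := by
    rw [← setLIntegral_const (dcube n Q) ((volume (dcube n Q))⁻¹ * S)]
    exact setLIntegral_mono' (measurable_dcube Q) (fun x hx => hC Q x hx)
  calc S = (volume (dcube n Q))⁻¹ * S * volume (dcube n Q) := by
        rw [mul_comm _ S, mul_assoc, ENNReal.inv_mul_cancel (dcube_vol_ne_zero Q)
          (dcube_vol_ne_top Q), mul_one]
    _ ≤ _ := h1

lemma carleson_embed (b : DIdx n → ℝ≥0∞) (Cf : EuclideanSpace ℝ (Fin n) → ℝ≥0∞)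
    (hC : ∀ Q : DIdx n, ∀ x ∈ dcube n Q,
      (volume (dcube n Q))⁻¹ * ∑' R : {R : DIdx n // dcube n R ⊆ dcube n Q}, b R ≤ Cf x)
    (Ω : Set (EuclideanSpace ℝ (Fin n))) :
    ∑' Q : {Q : DIdx n // dcube n Q ⊆ Ω}, b Q ≤ ∫⁻ x in Ω, Cf x := by
  classical
  rw [ENNReal.tsum_eq_iSup_sum]
  apply iSup_le
  intro F₀
  -- replace by a Finset of DIdx n
  set F' : Finset (DIdx n) := F₀.image Subtype.val with hF'def
  have hF' : ∀ Q ∈ F', dcube n Q ⊆ Ω := by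
    intro Q hQ
    rw [hF'def, Finset.mem_image] at hQ
    obtain ⟨R, _, rfl⟩ := hQ
    exact R.2
  have hsum : ∑ Q ∈ F₀, b Q = ∑ Q ∈ F', b Q := by
    rw [hF'def, Finset.sum_image (fun x _ y _ h => Subtype.val_injective h)]
  rw [hsum]
  -- maximal cube selection
  have hsel : ∀ Q : DIdx n, ∃ R, Q ∈ F' → (R ∈ F' ∧ dcube n Q ⊆ dcube n R ∧
      ∀ R' ∈ F', dcube n R ⊆ dcube n R' → dcube n R = dcube n R') := by
    intro Q
    by_cases hQ : Q ∈ F'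
    · obtain ⟨R, hR, hmax⟩ := Set.Finite.exists_maximalFor (fun R => dcube n R)
        {R | R ∈ F' ∧ dcube n Q ⊆ dcube n R}
        (F'.finite_toSet.subset fun x hx => hx.1) ⟨Q, hQ, subset_rfl⟩
      exact ⟨R, fun _ => ⟨hR.1, hR.2, fun R' hR' hsub => Set.Subset.antisymm hsub (hmax ⟨hR', hR.2.trans hsub⟩ hsub)⟩⟩
    · exact ⟨Q, fun h => absurd h hQ⟩
  choose φ hφ using hsel
  set t : Finset (Set (EuclideanSpace ℝ (Fin n))) := F'.image (fun Q => dcube n (φ Q)) with htdef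
  have hmapsto : ∀ Q ∈ F', dcube n (φ Q) ∈ t := by
    intro Q hQ
    exact Finset.mem_image_of_mem _ hQ
  rw [← Finset.sum_fiberwise_of_maps_to hmapsto b]
  -- bound each fiber
  have hfiber : ∀ m ∈ t, (∑ Q ∈ F'.filter (fun Q => dcube n (φ Q) = m), b Q) ≤
      ∫⁻ x in m, Cf x := by
    intro m hm
    rw [htdef, Finset.mem_image] at hm
    obtain ⟨Q₀, hQ₀, rfl⟩ := hm
    refine le_trans ?_ (single_cube_bound b Cf hC (φ Q₀))
    calc ∑ Q ∈ F'.filter (fun Q => dcube n (φ Q) = dcube n (φ Q₀)), b Q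
        ≤ ∑' R, Set.indicator {R : DIdx n | dcube n R ⊆ dcube n (φ Q₀)} b R := by
          refine le_trans (Finset.sum_le_sum fun Q hQ => ?_)
            (ENNReal.sum_le_tsum (F'.filter (fun Q => dcube n (φ Q) = dcube n (φ Q₀))))
          rw [Finset.mem_filter] at hQ
          have hsub : dcube n Q ⊆ dcube n (φ Q₀) := hQ.2 ▸ (hφ Q hQ.1).2.1
          rw [Set.indicator_of_mem (by exact hsub)]
      _ = ∑' R : {R : DIdx n // dcube n R ⊆ dcube n (φ Q₀)}, b R :=
          (tsum_subtype {R : DIdx n | dcube n R ⊆ dcube n (φ Q₀)} b).symm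
  refine le_trans (Finset.sum_le_sum hfiber) ?_
  -- disjointness of maximal cubes
  have hdisj : (↑t : Set (Set (EuclideanSpace ℝ (Fin n)))).PairwiseDisjoint id := by
    intro m₁ hm₁ m₂ hm₂ hne
    simp only [htdef, Finset.coe_image, Set.mem_image, Finset.mem_coe] at hm₁ hm₂
    obtain ⟨Q₁, hQ₁, rfl⟩ := hm₁
    obtain ⟨Q₂, hQ₂, rfl⟩ := hm₂
    rw [Function.onFun, Set.disjoint_iff_inter_eq_empty]
    by_contra hcon
    have hnonempty : (dcube n (φ Q₁) ∩ dcube n (φ Q₂)).Nonempty :=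
      Set.nonempty_iff_ne_empty.mpr hcon
    rcases dcube_nested hnonempty with hsub | hsub
    · exact hne ((hφ Q₁ hQ₁).2.2 (φ Q₂) (hφ Q₂ hQ₂).1 hsub)
    · exact hne ((hφ Q₂ hQ₂).2.2 (φ Q₁) (hφ Q₁ hQ₁).1 hsub).symm
  have hmeas : ∀ m ∈ t, MeasurableSet m := by
    intro m hm
    rw [htdef, Finset.mem_image] at hm
    obtain ⟨Q, _, rfl⟩ := hm
    exact measurable_dcube _
  calc ∑ m ∈ t, ∫⁻ x in m, Cf x
      = ∫⁻ x in ⋃ m ∈ t, m, Cf x := (lintegral_biUnion_finset hdisj hmeas Cf).symm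
    _ ≤ ∫⁻ x in Ω, Cf x := by
        apply lintegral_mono_set
        intro x hx
        simp only [Set.mem_iUnion] at hx
        obtain ⟨m, hm, hxm⟩ := hx
        rw [htdef, Finset.mem_image] at hm
        obtain ⟨Q, hQ, rfl⟩ := hm
        exact hF' (φ Q) (hφ Q hQ).1 hxm

lemma measurable_dyadic_sup (c : DIdx n → ℝ≥0∞) :
    Measurable (fun x : EuclideanSpace ℝ (Fin n) => ⨆ Q, ⨆ (_ : x ∈ dcube n Q), c Q) := by
  apply Measurable.iSup
  intro Q
  have : (fun x : EuclideanSpace ℝ (Fin n) => ⨆ (_ : x ∈ dcube n Q), c Q)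
      = (dcube n Q).indicator (fun _ => c Q) := by
    funext x
    by_cases h : x ∈ dcube n Q <;> simp [h]
  rw [this]
  exact measurable_const.indicator (measurable_dcube Q)

lemma vol_layer (a : ℝ≥0∞) : volume {t : ℝ | 0 < t ∧ ENNReal.ofReal t < a} = a := by
  by_cases ha : a = ⊤
  · have h : {t : ℝ | 0 < t ∧ ENNReal.ofReal t < a} = Set.Ioi 0 := by
      ext t; simp [ha]
    rw [h, Real.volume_Ioi, ha]
  · have h : {t : ℝ | 0 < t ∧ ENNReal.ofReal t < a} = Set.Ioo 0 a.toReal := by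
      ext t
      simp only [Set.mem_setOf_eq, Set.mem_Ioo]
      exact and_congr_right fun h1 => ENNReal.ofReal_lt_iff_lt_toReal h1.le ha
    rw [h, Real.volume_Ioo, sub_zero, ENNReal.ofReal_toReal ha]

lemma layer_int (a c : ℝ≥0∞) :
    ∫⁻ t in Set.Ioi (0:ℝ), Set.indicator {t : ℝ | ENNReal.ofReal t < a} (fun _ => c) t = c * a := by
  have hs : MeasurableSet {t : ℝ | ENNReal.ofReal t < a} :=
    measurableSet_lt ENNReal.measurable_ofReal measurable_const
  rw [lintegral_indicator hs, Measure.restrict_restrict hs, setLIntegral_const]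
  have : {t : ℝ | ENNReal.ofReal t < a} ∩ Set.Ioi 0 = {t : ℝ | 0 < t ∧ ENNReal.ofReal t < a} := by
    ext t; simp [Set.mem_Ioi, and_comm]
  rw [this, vol_layer]

lemma main_core (a b : DIdx n → ℝ≥0∞) (N C : EuclideanSpace ℝ (Fin n) → ℝ≥0∞)
    (hNm : Measurable N) (hCm : Measurable C)
    (hN : ∀ Q : DIdx n, ∀ x ∈ dcube n Q, a Q ≤ N x)
    (hC : ∀ Q : DIdx n, ∀ x ∈ dcube n Q,
      (volume (dcube n Q))⁻¹ * ∑' R : {R : DIdx n // dcube n R ⊆ dcube n Q}, b R ≤ C x) :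
    ∑' Q, a Q * b Q ≤ ∫⁻ x, N x * C x := by
  have step1 : ∀ Q : DIdx n, a Q * b Q =
      ∫⁻ t in Set.Ioi (0:ℝ), Set.indicator {t : ℝ | ENNReal.ofReal t < a Q} (fun _ => b Q) t := by
    intro Q; rw [layer_int, mul_comm]
  calc ∑' Q, a Q * b Q
      = ∑' Q, ∫⁻ t in Set.Ioi (0:ℝ),
          Set.indicator {t : ℝ | ENNReal.ofReal t < a Q} (fun _ => b Q) t := by
        exact tsum_congr step1
    _ = ∫⁻ t in Set.Ioi (0:ℝ), ∑' Q,
          Set.indicator {t : ℝ | ENNReal.ofReal t < a Q} (fun _ => b Q) t := by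
        rw [← lintegral_tsum]
        intro Q
        exact (measurable_const.indicator
          (measurableSet_lt ENNReal.measurable_ofReal measurable_const)).aemeasurable
    _ ≤ ∫⁻ t in Set.Ioi (0:ℝ), ∫⁻ x in {x | ENNReal.ofReal t < N x}, C x := by
        apply lintegral_mono
        intro t
        refine le_trans ?_ (carleson_embed b C hC {x | ENNReal.ofReal t < N x})
        refine le_trans ?_ (le_of_eq
          (tsum_subtype {R : DIdx n | dcube n R ⊆ {x | ENNReal.ofReal t < N x}} b).symm)
        apply ENNReal.tsum_le_tsum
        intro Q
        by_cases h : ENNReal.ofReal t < a Q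
        · rw [Set.indicator_of_mem (by exact h), Set.indicator_of_mem]
          exact fun x hx => lt_of_lt_of_le h (hN Q x hx)
        · rw [Set.indicator_of_notMem (by exact h)]
          exact zero_le
    _ = ∫⁻ t in Set.Ioi (0:ℝ), ∫⁻ x,
          (fun t x => if ENNReal.ofReal t < N x then C x else 0) t x := by
        apply lintegral_congr
        intro t
        rw [← lintegral_indicator (measurableSet_lt measurable_const hNm)]
        apply lintegral_congr
        intro x
        rw [Set.indicator_apply]
        rfl
    _ = ∫⁻ x, ∫⁻ t in Set.Ioi (0:ℝ),
          (fun t x => if ENNReal.ofReal t < N x then C x else 0) t x := by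
        apply lintegral_lintegral_swap
        apply Measurable.aemeasurable
        apply Measurable.ite
        · exact measurableSet_lt (ENNReal.measurable_ofReal.comp measurable_fst)
            (hNm.comp measurable_snd)
        · exact hCm.comp measurable_snd
        · exact measurable_const
    _ = ∫⁻ x, N x * C x := by
        apply lintegral_congr
        intro x
        have : (fun t : ℝ => if ENNReal.ofReal t < N x then C x else 0)
            = Set.indicator {t : ℝ | ENNReal.ofReal t < N x} (fun _ => C x) := by
          funext t
          rw [Set.indicator_apply]
          rfl
        rw [this, layer_int, mul_comm]

lemma holder_step {α : Type*} [MeasurableSpace α] (μ : Measure α) (p p' : ℝ≥0∞)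
    (hp1 : 1 ≤ p) (hptop : p ≠ ∞) (hconj : 1/p + 1/p' = 1)
    (N C : α → ℝ≥0∞) (hNm : Measurable N) (hCm : Measurable C) :
    ∫⁻ x, N x * C x ∂μ ≤ eLp p N μ * eLp p' C μ := by
  have hconj' : p⁻¹ + p'⁻¹ = 1 := by rw [one_div, one_div] at hconj; exact hconj
  rcases eq_or_lt_of_le hp1 with hp | hp
  · -- p = 1, p' = ∞
    have hp1' : p = 1 := hp.symm
    have hp' : p' = ∞ := by
      rw [hp1', inv_one] at hconj'
      have h0 : p'⁻¹ = 0 := by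
        have h1 : (1:ℝ≥0∞) + p'⁻¹ = 1 + 0 := by rw [add_zero]; exact hconj'
        exact WithTop.add_left_cancel ENNReal.one_ne_top h1
      simpa [ENNReal.inv_eq_zero] using h0
    subst hp1'; subst hp'
    rw [eLp, eLp, if_neg (by norm_num : (1:ℝ≥0∞) ≠ ∞), if_pos rfl]
    simp only [ENNReal.toReal_one, ENNReal.rpow_one, inv_one]
    calc ∫⁻ x, N x * C x ∂μ ≤ ∫⁻ x, essSup C μ * N x ∂μ := by
          apply lintegral_mono_ae
          filter_upwards [ENNReal.ae_le_essSup C] with x hx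
          calc N x * C x ≤ N x * essSup C μ := mul_le_mul_right hx _
            _ = essSup C μ * N x := mul_comm _ _
      _ = essSup C μ * ∫⁻ x, N x ∂μ := lintegral_const_mul _ hNm
      _ = (∫⁻ x, N x ∂μ) * essSup C μ := mul_comm _ _
  · -- 1 < p
    have hpne0 : p ≠ 0 := by positivity
    have hp'top : p' ≠ ∞ := by
      intro h
      rw [h, ENNReal.inv_top, add_zero] at hconj'
      rw [ENNReal.inv_eq_one] at hconj'
      exact hp.ne' hconj'
    have hp'ne0 : p' ≠ 0 := by
      intro h
      rw [h, ENNReal.inv_zero] at hconj'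
      simp at hconj'
    have hsum : p.toReal⁻¹ + p'.toReal⁻¹ = 1 := by
      have h1 : (p⁻¹).toReal + (p'⁻¹).toReal = 1 := by
        rw [← ENNReal.toReal_add (ENNReal.inv_ne_top.mpr hpne0)
          (ENNReal.inv_ne_top.mpr hp'ne0), hconj']
        simp
      simpa [ENNReal.toReal_inv] using h1
    have hlt : 1 < p.toReal := by
      have := (ENNReal.toReal_lt_toReal (by norm_num : (1:ℝ≥0∞) ≠ ∞) hptop).mpr hp
      simpa using this
    have hpq : Real.HolderConjugate p.toReal p'.toReal := Real.holderConjugate_iff.mpr ⟨hlt, hsum⟩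
    rw [eLp, eLp, if_neg hptop, if_neg hp'top]
    have h := ENNReal.lintegral_mul_le_Lp_mul_Lq μ hpq hNm.aemeasurable hCm.aemeasurable
    simpa [one_div, Pi.mul_apply] using h

/-- Theorem 2.2(i): `∑_Q |⟨f_Q, g_Q⟩| ≤ C ‖N_X f‖_p ‖C_Y g‖_{p'}`, with `C` depending
only on `p`, `n` and the uniform duality constant `C₀`. -/
theorem stmt0 (n : ℕ) (p p' : ℝ≥0∞) (hp1 : 1 ≤ p) (hptop : p ≠ ∞)
    (hconj : 1/p + 1/p' = 1) (C₀ : ℝ) (hC₀ : 0 < C₀) :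
    ∃ C : ℝ, 0 < C ∧
      ∀ (X Y : DIdx n → Type)
        [∀ Q, NormedAddCommGroup (X Q)] [∀ Q, NormedSpace ℝ (X Q)]
        [∀ Q, CompleteSpace (X Q)]
        [∀ Q, NormedAddCommGroup (Y Q)] [∀ Q, NormedSpace ℝ (Y Q)]
        [∀ Q, CompleteSpace (Y Q)]
        (pair : ∀ Q, X Q →ₗ[ℝ] Y Q →ₗ[ℝ] ℝ),
        (∀ Q, IsDuality (pair Q) C₀) →
        ∀ (f : ∀ Q, X Q) (g : ∀ Q, Y Q),
          ∑' Q, (‖pair Q (f Q) (g Q)‖₊ : ℝ≥0∞) ≤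
            ENNReal.ofReal C * eLp p (NX f) volume * eLp p' (CY g) volume := by
  refine ⟨C₀, hC₀, ?_⟩
  intro X Y _ _ _ _ _ _ pair hdual f g
  have hNm : Measurable (NX f) := measurable_dyadic_sup (fun Q => (‖f Q‖₊ : ℝ≥0∞))
  have hCm : Measurable (CY g) := measurable_dyadic_sup
    (fun Q => (volume (dcube n Q))⁻¹ *
      ∑' R : {R : DIdx n // dcube n R ⊆ dcube n Q}, (‖g R.1‖₊ : ℝ≥0∞))
  have hN : ∀ Q : DIdx n, ∀ x ∈ dcube n Q, (‖f Q‖₊ : ℝ≥0∞) ≤ NX f x := fun Q x hx =>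
    le_iSup_of_le Q (le_iSup (fun _ : x ∈ dcube n Q => (‖f Q‖₊ : ℝ≥0∞)) hx)
  have hC : ∀ Q : DIdx n, ∀ x ∈ dcube n Q, (volume (dcube n Q))⁻¹ *
      ∑' R : {R : DIdx n // dcube n R ⊆ dcube n Q}, (‖g R.1‖₊ : ℝ≥0∞) ≤ CY g x := fun Q x hx =>
    le_iSup_of_le Q (le_iSup (fun _ : x ∈ dcube n Q => _) hx)
  have hpair : ∀ Q : DIdx n, (‖pair Q (f Q) (g Q)‖₊ : ℝ≥0∞) ≤
      ENNReal.ofReal C₀ * ((‖f Q‖₊ : ℝ≥0∞) * (‖g Q‖₊ : ℝ≥0∞)) := by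
    intro Q
    rw [← enorm_eq_nnnorm, Real.enorm_eq_ofReal_abs]
    refine le_trans (ENNReal.ofReal_le_ofReal ((hdual Q).1 (f Q) (g Q))) ?_
    rw [ENNReal.ofReal_mul (by positivity), ENNReal.ofReal_mul hC₀.le,
      ofReal_norm, ofReal_norm, mul_assoc, enorm_eq_nnnorm, enorm_eq_nnnorm]
  calc ∑' Q, (‖pair Q (f Q) (g Q)‖₊ : ℝ≥0∞)
      ≤ ∑' Q, ENNReal.ofReal C₀ * ((‖f Q‖₊ : ℝ≥0∞) * (‖g Q‖₊ : ℝ≥0∞)) :=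
        ENNReal.tsum_le_tsum hpair
    _ = ENNReal.ofReal C₀ * ∑' Q, (‖f Q‖₊ : ℝ≥0∞) * (‖g Q‖₊ : ℝ≥0∞) := ENNReal.tsum_mul_left
    _ ≤ ENNReal.ofReal C₀ * ∫⁻ x, NX f x * CY g x :=
        mul_le_mul_right (main_core _ _ (NX f) (CY g) hNm hCm hN hC) _
    _ ≤ ENNReal.ofReal C₀ * (eLp p (NX f) volume * eLp p' (CY g) volume) :=
        mul_le_mul_right (holder_step volume p p' hp1 hptop hconj _ _ hNm hCm) _
    _ = ENNReal.ofReal C₀ * eLp p (NX f) volume * eLp p' (CY g) volume := (mul_assoc _ _ _).symm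

end
end

section
/- Let 1 ≤ p < ∞ and 1/p + 1/p' = 1. There is a constant 0 < C < ∞, depending only on p, n and the uniform duality constant, such that for every sequence g = (g_Q)_{Q∈𝒟} with g_Q ∈ Y_Q, one has ‖C_Y g‖_{L_{p'}(ℝ^n)} ≤ C sup { ∑_{Q∈𝒟} ⟨f_Q, g_Q⟩ : f = (f_Q)_{Q∈𝒟}, f_Q ∈ X_Q, ‖N_X f‖_{L_p(ℝ^n)} = 1 }. -/
open MeasureTheory ENNReal

noncomputable section

namespace S2
open Set


variable {n : ℕ}

lemma dcube_eq_preimage (Q : DIdx n) :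
    dcube n Q = (MeasurableEquiv.toLp 2 (Fin n → ℝ)).symm ⁻¹'
      (Set.univ.pi fun i => Ioo ((2:ℝ) ^ (-Q.1) * (Q.2 i : ℝ)) ((2:ℝ) ^ (-Q.1) * ((Q.2 i : ℝ) + 1))) := by
  ext x
  simp [dcube, Set.mem_univ_pi, MeasurableEquiv.coe_toLp_symm]

lemma measurableSet_dcube (Q : DIdx n) : MeasurableSet (dcube n Q) := by
  rw [dcube_eq_preimage]
  exact (MeasurableEquiv.measurable _) (MeasurableSet.univ_pi fun i => measurableSet_Ioo)

lemma volume_dcube (Q : DIdx n) :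
    volume (dcube n Q) = ENNReal.ofReal ((2:ℝ) ^ (-Q.1)) ^ n := by
  rw [dcube_eq_preimage,
    (EuclideanSpace.volume_preserving_symm_measurableEquiv_toLp (Fin n)).measure_preimage
      ((MeasurableSet.univ_pi fun i => measurableSet_Ioo)).nullMeasurableSet,
    volume_pi_pi]
  have : ∀ i : Fin n, volume (Ioo ((2:ℝ) ^ (-Q.1) * (Q.2 i : ℝ)) ((2:ℝ) ^ (-Q.1) * ((Q.2 i : ℝ) + 1)))
      = ENNReal.ofReal ((2:ℝ) ^ (-Q.1)) := by
    intro i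
    rw [Real.volume_Ioo]
    congr 1
    ring
  rw [Finset.prod_congr rfl (fun i _ => this i)]
  simp [Finset.prod_const]

lemma volume_dcube_pos (Q : DIdx n) : 0 < volume (dcube n Q) := by
  rw [volume_dcube]
  positivity

lemma volume_dcube_ne_top (Q : DIdx n) : volume (dcube n Q) ≠ ∞ := by
  rw [volume_dcube]
  exact pow_ne_top ofReal_ne_top

lemma dcube_nonempty (Q : DIdx n) : (dcube n Q).Nonempty := by
  refine ⟨WithLp.toLp 2 (fun i => (2:ℝ) ^ (-Q.1) * ((Q.2 i : ℝ) + 1/2)), fun i => ?_⟩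
  have h : (0:ℝ) < (2:ℝ) ^ (-Q.1) := by positivity
  simp only [WithLp.ofLp_toLp]
  constructor <;> nlinarith



/-- interval version: coarser interval (scale j) and finer (scale j') intersecting implies finer ⊆. -/
lemma interval_nest {j j' k m : ℤ} (hj : j ≤ j') {x : ℝ}
    (h1 : (2:ℝ) ^ (-j) * k < x) (h2 : x < (2:ℝ) ^ (-j) * (k+1))
    (h3 : (2:ℝ) ^ (-j') * m < x) (h4 : x < (2:ℝ) ^ (-j') * (m+1)) :
    (2:ℝ) ^ (-j) * k ≤ (2:ℝ) ^ (-j') * m ∧ (2:ℝ) ^ (-j') * (m+1) ≤ (2:ℝ) ^ (-j) * (k+1) := by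
  set a : ℤ := 2 ^ (j' - j).toNat with ha
  have hpos' : (0:ℝ) < (2:ℝ) ^ (-j') := by positivity
  have hkey : (2:ℝ) ^ (-j) = (2:ℝ) ^ (-j') * (a : ℝ) := by
    rw [ha]
    push_cast
    rw [← zpow_natCast (2:ℝ) (j' - j).toNat, Int.toNat_of_nonneg (by omega), ← zpow_add₀ (by norm_num)]
    congr 1
    omega
  -- integer inequalities
  have hik : (2:ℝ) ^ (-j') * (a * k) < (2:ℝ) ^ (-j') * (m+1) := by
    calc (2:ℝ) ^ (-j') * (a * k) = (2:ℝ)^(-j) * k := by rw [hkey]; ring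
    _ < x := h1
    _ < _ := h4
  have hmk : (2:ℝ) ^ (-j') * m < (2:ℝ) ^ (-j') * (a * (k+1)) := by
    calc (2:ℝ) ^ (-j') * m < x := h3
    _ < (2:ℝ)^(-j) * (k+1) := h2
    _ = _ := by rw [hkey]; ring
  have hik' : a * k < m + 1 := by
    have := (mul_lt_mul_iff_right₀ hpos').mp hik
    exact_mod_cast this
  have hmk' : m < a * (k+1) := by
    have := (mul_lt_mul_iff_right₀ hpos').mp hmk
    exact_mod_cast this
  have l1 : a * k ≤ m := by omega
  have l2 : m + 1 ≤ a * (k + 1) := by omega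
  have r1 : (a:ℝ) * k ≤ (m:ℝ) := by exact_mod_cast l1
  have r2 : (m:ℝ) + 1 ≤ (a:ℝ) * ((k:ℝ)+1) := by push_cast; exact_mod_cast l2
  constructor
  · rw [hkey]; nlinarith [hpos'.le]
  · rw [hkey]; nlinarith [hpos'.le]

/-- If a coarser cube meets a finer cube, the finer is contained in the coarser. -/
lemma dcube_nest {Q Q' : DIdx n} (hj : Q.1 ≤ Q'.1)
    (hx : (dcube n Q ∩ dcube n Q').Nonempty) : dcube n Q' ⊆ dcube n Q := by
  obtain ⟨x, hxQ, hxQ'⟩ := hx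
  intro y hy i
  obtain ⟨h1, h2⟩ := hxQ i
  obtain ⟨h3, h4⟩ := hxQ' i
  obtain ⟨l1, l2⟩ := interval_nest hj h1 h2 h3 h4
  obtain ⟨g1, g2⟩ := hy i
  exact ⟨lt_of_le_of_lt l1 g1, lt_of_lt_of_le g2 l2⟩

lemma dcube_subset_or_disjoint (Q Q' : DIdx n) :
    dcube n Q ⊆ dcube n Q' ∨ dcube n Q' ⊆ dcube n Q ∨ Disjoint (dcube n Q) (dcube n Q') := by
  by_cases hd : Disjoint (dcube n Q) (dcube n Q')
  · exact Or.inr (Or.inr hd)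
  rw [Set.not_disjoint_iff_nonempty_inter] at hd
  rcases le_total Q.1 Q'.1 with h | h
  · exact Or.inr (Or.inl (dcube_nest h hd))
  · exact Or.inl (dcube_nest h (by rwa [Set.inter_comm]))

/-- Subset implies larger-or-equal scale index (smaller cube), for n ≥ 1. -/
lemma scale_le_of_subset (hn : 1 ≤ n) {Q Q' : DIdx n} (h : dcube n Q ⊆ dcube n Q') :
    Q'.1 ≤ Q.1 := by
  by_contra hlt
  push_neg at hlt
  have hvol := measure_mono (μ := volume) h
  rw [volume_dcube, volume_dcube] at hvol
  have h2 : ENNReal.ofReal ((2:ℝ) ^ (-Q'.1)) ^ n < ENNReal.ofReal ((2:ℝ) ^ (-Q.1)) ^ n := by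
    apply ENNReal.pow_lt_pow_left (by omega)
    rw [ENNReal.ofReal_lt_ofReal_iff (by positivity)]
    apply zpow_lt_zpow_right₀ (by norm_num) (by omega)
  exact absurd hvol (not_le.mpr h2)

/-- Same scale, subset implies equal. -/
lemma eq_of_subset_of_scale_eq {Q Q' : DIdx n} (hs : Q.1 = Q'.1)
    (h : dcube n Q ⊆ dcube n Q') : Q = Q' := by
  by_contra hne
  have hk : Q.2 ≠ Q'.2 := by
    intro h2; exact hne (Prod.ext hs h2)
  obtain ⟨i, hi⟩ := Function.ne_iff.mp hk
  obtain ⟨x, hx⟩ := dcube_nonempty Q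
  have hx' := h hx
  obtain ⟨a1, a2⟩ := hx i
  obtain ⟨b1, b2⟩ := hx' i
  rw [← hs] at b1 b2
  have hpos : (0:ℝ) < (2:ℝ) ^ (-Q.1) := by positivity
  have c1 : (Q.2 i : ℝ) < (Q'.2 i : ℝ) + 1 := by
    have := a1.trans b2
    exact (mul_lt_mul_iff_right₀ hpos).mp this
  have c2 : (Q'.2 i : ℝ) < (Q.2 i : ℝ) + 1 := by
    have := b1.trans a2
    exact (mul_lt_mul_iff_right₀ hpos).mp this
  have d1 : Q.2 i < Q'.2 i + 1 := by exact_mod_cast c1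
  have d2 : Q'.2 i < Q.2 i + 1 := by exact_mod_cast c2
  exact hi (by omega)

/-- Two distinct cubes that both contain a common nonempty cube at the same scale: impossible. -/
lemma eq_of_superset_same_scale {R Q Q' : DIdx n} (h1 : dcube n R ⊆ dcube n Q)
    (h2 : dcube n R ⊆ dcube n Q') (hs : Q.1 = Q'.1) : Q = Q' := by
  obtain ⟨x, hx⟩ := dcube_nonempty R
  have hne : (dcube n Q ∩ dcube n Q').Nonempty := ⟨x, h1 hx, h2 hx⟩
  have := dcube_nest (le_of_eq hs) hne
  exact (eq_of_subset_of_scale_eq hs.symm this).symm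



/-- `t2 x = 2 ^ x` in `ℝ≥0∞`. -/
def t2 (x : ℝ) : ℝ≥0∞ := (2:ℝ≥0∞) ^ x

lemma t2_ne_zero (x : ℝ) : t2 x ≠ 0 := by
  simp [t2, ENNReal.rpow_eq_zero_iff]

lemma t2_ne_top (x : ℝ) : t2 x ≠ ∞ := by
  simp [t2, ENNReal.rpow_eq_top_iff]

lemma t2_pos (x : ℝ) : 0 < t2 x := pos_iff_ne_zero.mpr (t2_ne_zero x)

lemma t2_add (x y : ℝ) : t2 (x + y) = t2 x * t2 y := ENNReal.rpow_add x y (by norm_num) (by norm_num)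

lemma t2_mono {x y : ℝ} (h : x ≤ y) : t2 x ≤ t2 y := ENNReal.rpow_le_rpow_of_exponent_le (by norm_num) h

lemma t2_rpow (x y : ℝ) : (t2 x) ^ y = t2 (x * y) := (ENNReal.rpow_mul 2 x y).symm

lemma t2_inv (x : ℝ) : (t2 x)⁻¹ = t2 (-x) := by rw [t2, t2, ENNReal.rpow_neg]

lemma t2_one : t2 1 = 2 := by simp [t2]

lemma t2_zero : t2 0 = 1 := by simp [t2]

lemma t2_lt_one {x : ℝ} (h : x < 0) : t2 x < 1 :=
  ENNReal.rpow_lt_one_of_one_lt_of_neg (by norm_num) h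

lemma t2_nat (m : ℕ) : t2 (m : ℝ) = 2 ^ m := by rw [t2, ENNReal.rpow_natCast]

/-- Geometric sum over `k ≤ m` in `ℤ`. -/
lemma geo_sum {e : ℝ} (he : 0 < e) (m : ℤ) :
    ∑' k : ℤ, (if k ≤ m then t2 ((k:ℝ) * e) else 0) = t2 ((m:ℝ) * e) * (1 - t2 (-e))⁻¹ := by
  have hinj : Function.Injective (fun l : ℕ => m - (l:ℤ)) := by
    intro a b h; simpa using h
  have hsupp : Function.support (fun k : ℤ => (if k ≤ m then t2 ((k:ℝ) * e) else 0))
      ⊆ Set.range (fun l : ℕ => m - (l:ℤ)) := by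
    intro k hk
    by_cases h : k ≤ m
    · exact ⟨(m - k).toNat, by show m - ((m - k).toNat : ℤ) = k; omega⟩
    · simp [h] at hk
  rw [← hinj.tsum_eq hsupp]
  have hterm : ∀ l : ℕ, (if (m - (l:ℤ)) ≤ m then t2 ((((m - (l:ℤ)) : ℤ):ℝ) * e) else 0)
      = t2 ((m:ℝ) * e) * (t2 (-e)) ^ l := by
    intro l
    rw [if_pos (by omega)]
    rw [← ENNReal.rpow_natCast (t2 (-e)) l, t2_rpow, ← t2_add]
    congr 1
    push_cast
    ring
  rw [tsum_congr hterm, ENNReal.tsum_mul_left, ENNReal.tsum_geometric]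

/-- σ, the geometric series constant. -/
lemma sigma_facts {e : ℝ} (he : 0 < e) :
    (1:ℝ≥0∞) ≤ (1 - t2 (-e))⁻¹ ∧ (1 - t2 (-e))⁻¹ ≠ ∞ := by
  have h1 : t2 (-e) < 1 := t2_lt_one (by linarith)
  constructor
  · rw [ENNReal.le_inv_iff_mul_le, one_mul]
    exact tsub_le_self
  · simp only [ne_eq, ENNReal.inv_eq_top]
    rw [tsub_eq_zero_iff_le]
    exact fun h => absurd (lt_of_lt_of_le h1 h) (lt_irrefl _)


variable {n : ℕ}

lemma scale_bdd (hn : 1 ≤ n) {V : ℝ≥0∞} (hV : V ≠ ∞) :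
    ∃ jm : ℤ, ∀ Q : DIdx n, volume (dcube n Q) ≤ V → jm ≤ Q.1 := by
  obtain ⟨m, hm⟩ := ENNReal.exists_nat_gt hV
  refine ⟨-(m:ℤ), fun Q hQ => ?_⟩
  by_contra hlt
  push_neg at hlt
  have h1 : (m:ℝ) ≤ (2:ℝ) ^ (-Q.1) := by
    calc (m:ℝ) ≤ 2 ^ m := by
          exact_mod_cast Nat.le_of_lt (Nat.lt_two_pow_self (n := m))
    _ = (2:ℝ) ^ (m:ℤ) := by rw [zpow_natCast]
    _ ≤ (2:ℝ) ^ (-Q.1) := by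
          apply zpow_le_zpow_right₀ (by norm_num)
          omega
  have h2 : (m : ℝ≥0∞) ≤ ENNReal.ofReal ((2:ℝ) ^ (-Q.1)) := by
    rw [← ENNReal.ofReal_natCast]
    exact ENNReal.ofReal_le_ofReal h1
  have h3 : ENNReal.ofReal ((2:ℝ) ^ (-Q.1)) ≤ volume (dcube n Q) := by
    rw [volume_dcube]
    refine le_self_pow₀ ?_ (by omega)
    rw [ENNReal.one_le_ofReal]
    have := zpow_le_zpow_right₀ (by norm_num : (1:ℝ) ≤ 2) (by omega : (0:ℤ) ≤ -Q.1)
    simpa using this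
  exact absurd ((h2.trans h3).trans hQ) (not_le.mpr hm)

/-- Existence of maximal cubes. -/
lemma exists_maximal (hn : 1 ≤ n) (𝒬 : Set (DIdx n)) {V : ℝ≥0∞} (hV : V ≠ ∞)
    (hbdd : ∀ Q ∈ 𝒬, volume (dcube n Q) ≤ V) {Q₀ : DIdx n} (hQ₀ : Q₀ ∈ 𝒬) :
    ∃ Qm ∈ 𝒬, dcube n Q₀ ⊆ dcube n Qm ∧ ∀ Q' ∈ 𝒬, dcube n Qm ⊆ dcube n Q' → Q' = Qm := by
  obtain ⟨jmin, hjmin⟩ := scale_bdd hn hV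
  set P : ℤ → Prop := fun j => ∃ Q' ∈ 𝒬, Q'.1 = j ∧ dcube n Q₀ ⊆ dcube n Q' with hP
  have hex : ∃ j, P j := ⟨Q₀.1, Q₀, hQ₀, rfl, subset_rfl⟩
  have hbd : ∃ b, ∀ z, P z → b ≤ z := by
    refine ⟨jmin, fun z hz => ?_⟩
    obtain ⟨Q', hQ', hz1, _⟩ := hz
    exact hz1 ▸ hjmin Q' (hbdd Q' hQ')
  obtain ⟨jm, hPjm, hleast⟩ := Int.exists_least_of_bdd hbd hex
  obtain ⟨Qm, hQm, hjm, hsub⟩ := hPjm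
  refine ⟨Qm, hQm, hsub, fun Q' hQ' hss => ?_⟩
  have h1 : dcube n Q₀ ⊆ dcube n Q' := hsub.trans hss
  have h2 : jm ≤ Q'.1 := hleast _ ⟨Q', hQ', rfl, h1⟩
  have h3 : Q'.1 ≤ Qm.1 := scale_le_of_subset hn hss
  exact (eq_of_subset_of_scale_eq (by omega : Qm.1 = Q'.1) hss).symm

/-- The averaging functional. -/
def Afun (n : ℕ) (b : DIdx n → ℝ≥0∞) (Q : DIdx n) : ℝ≥0∞ :=
  (volume (dcube n Q))⁻¹ * ∑' R : {R : DIdx n // dcube n R ⊆ dcube n Q}, b R.1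

/-- Scalar Carleson functional. -/
def Cfun (n : ℕ) (b : DIdx n → ℝ≥0∞) (x : EuclideanSpace ℝ (Fin n)) : ℝ≥0∞ :=
  ⨆ Q, ⨆ (_ : x ∈ dcube n Q), Afun n b Q

/-- Scalar nontangential maximal function. -/
def NN (n : ℕ) (a : DIdx n → ℝ≥0∞) (x : EuclideanSpace ℝ (Fin n)) : ℝ≥0∞ :=
  ⨆ Q, ⨆ (_ : x ∈ dcube n Q), a Q

lemma measurable_piece (c : ℝ≥0∞) (Q : DIdx n) :
    Measurable (fun x : EuclideanSpace ℝ (Fin n) => ⨆ (_ : x ∈ dcube n Q), c) := by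
  have : (fun x : EuclideanSpace ℝ (Fin n) => ⨆ (_ : x ∈ dcube n Q), c)
      = (dcube n Q).indicator (fun _ => c) := by
    funext x
    by_cases h : x ∈ dcube n Q <;> simp [h]
  rw [this]
  exact measurable_const.indicator (measurableSet_dcube Q)

lemma measurable_Cfun (b : DIdx n → ℝ≥0∞) : Measurable (Cfun n b) := by
  apply Measurable.iSup
  intro Q
  exact measurable_piece _ Q


set_option maxHeartbeats 1000000 in
theorem core {n : ℕ} (hn : 1 ≤ n) {pr qr : ℝ} (hpr : 1 < pr) (hqr : 1 < qr)
    (hconj : (qr - 1) * pr = qr) (hconj2 : pr⁻¹ + qr⁻¹ = 1)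
    (b : DIdx n → ℝ≥0∞) (F : Finset (DIdx n)) (hb0 : ∀ R ∉ F, b R = 0)
    (hbt : ∀ R, b R ≠ ∞) :
    ∃ a : DIdx n → ℝ≥0∞, (∀ R, a R ≠ ∞) ∧
      (∫⁻ x, (NN n a x) ^ pr) ^ pr⁻¹ ≤ 1 ∧
      (∫⁻ x, (Cfun n b x) ^ qr) ^ qr⁻¹ ≤
        2 * (1 - t2 (-(qr-1)))⁻¹ * ∑' R, a R * b R := by
  classical
  have hqr0 : (0:ℝ) < qr := by linarith
  have hpr0 : (0:ℝ) < pr := by linarith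
  obtain ⟨hσ1, hσtop⟩ := sigma_facts (e := qr - 1) (by linarith)
  set σ : ℝ≥0∞ := (1 - t2 (-(qr-1)))⁻¹ with hσdef
  have hσ0 : σ ≠ 0 := by
    intro h; rw [h] at hσ1; exact absurd hσ1 (by norm_num)
  -- trivial case : b ≡ 0
  have htriv : (∀ R, b R = 0) → ∃ a : DIdx n → ℝ≥0∞, (∀ R, a R ≠ ∞) ∧
      (∫⁻ x, (NN n a x) ^ pr) ^ pr⁻¹ ≤ 1 ∧
      (∫⁻ x, (Cfun n b x) ^ qr) ^ qr⁻¹ ≤ 2 * σ * ∑' R, a R * b R := by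
    intro hball
    refine ⟨0, by simp, ?_, ?_⟩
    · have : (NN n 0) = fun _ => 0 := by
        funext x; simp [NN]
      rw [this]
      simp [ENNReal.zero_rpow_of_pos hpr0, ENNReal.zero_rpow_of_pos (inv_pos.mpr hpr0)]
    · have hA : ∀ Q, Afun n b Q = 0 := by
        intro Q
        simp [Afun, hball]
      have : (Cfun n b) = fun _ => 0 := by
        funext x
        simp [Cfun, hA]
      rw [this]
      simp [ENNReal.zero_rpow_of_pos hqr0, ENNReal.zero_rpow_of_pos (inv_pos.mpr hqr0)]
  by_cases hF0 : ∀ R, b R = 0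
  · exact htriv hF0
  push_neg at hF0
  obtain ⟨R₁, hR₁⟩ := hF0
  set F₀ : Finset (DIdx n) := F.filter (fun R => b R ≠ 0) with hF₀def
  have hF₀ne : F₀.Nonempty := by
    refine ⟨R₁, ?_⟩
    rw [hF₀def, Finset.mem_filter]
    exact ⟨by by_contra h; exact hR₁ (hb0 _ h), hR₁⟩
  set B : ℝ≥0∞ := ∑ R ∈ F, b R with hBdef
  have hBtop : B ≠ ∞ := by
    rw [hBdef]
    exact (ENNReal.sum_lt_top.mpr (fun R _ => lt_top_iff_ne_top.mpr (hbt R))).ne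
  have hsum_le : ∀ Q : DIdx n, (∑' R : {R : DIdx n // dcube n R ⊆ dcube n Q}, b R.1) ≤ B := by
    intro Q
    calc (∑' R : {R : DIdx n // dcube n R ⊆ dcube n Q}, b R.1)
        = ∑' R, Set.indicator {R : DIdx n | dcube n R ⊆ dcube n Q} b R :=
          tsum_subtype {R : DIdx n | dcube n R ⊆ dcube n Q} b
      _ ≤ ∑' R, b R := ENNReal.tsum_le_tsum (fun R => Set.indicator_le_self _ _ R)
      _ = B := tsum_eq_sum (fun R hR => hb0 R hR)
  set vmin : ℝ≥0∞ := F₀.inf' hF₀ne (fun R => volume (dcube n R)) with hvmindef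
  have hvmin0 : vmin ≠ 0 := by
    rw [hvmindef]
    rw [← pos_iff_ne_zero, Finset.lt_inf'_iff]
    exact fun R _ => volume_dcube_pos R
  set Abnd : ℝ≥0∞ := vmin⁻¹ * B with hAbnddef
  have hAbndtop : Abnd ≠ ∞ :=
    ENNReal.mul_ne_top (ENNReal.inv_ne_top.mpr hvmin0) hBtop
  have hA_mem : ∀ Q : DIdx n, Afun n b Q ≠ 0 → ∃ R ∈ F₀, dcube n R ⊆ dcube n Q := by
    intro Q hQ
    have hs : (∑' R : {R : DIdx n // dcube n R ⊆ dcube n Q}, b R.1) ≠ 0 := by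
      intro h
      rw [Afun, h, mul_zero] at hQ
      exact hQ rfl
    rw [ne_eq, ENNReal.tsum_eq_zero] at hs
    push_neg at hs
    obtain ⟨⟨R, hRQ⟩, hRb⟩ := hs
    refine ⟨R, ?_, hRQ⟩
    rw [hF₀def, Finset.mem_filter]
    refine ⟨?_, hRb⟩
    by_contra h
    exact hRb (hb0 R h)
  have hA_le : ∀ Q : DIdx n, Afun n b Q ≤ Abnd := by
    intro Q
    by_cases h0 : Afun n b Q = 0
    · rw [h0]; exact zero_le
    obtain ⟨R, hRF, hRQ⟩ := hA_mem Q h0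
    have h1 : vmin ≤ volume (dcube n Q) := by
      calc vmin ≤ volume (dcube n R) := Finset.inf'_le _ hRF
        _ ≤ volume (dcube n Q) := measure_mono hRQ
    calc Afun n b Q ≤ (volume (dcube n Q))⁻¹ * B := by
          rw [Afun]; exact mul_le_mul_right (hsum_le Q) _
      _ ≤ vmin⁻¹ * B := mul_le_mul_left (ENNReal.inv_le_inv' h1) _
  have hC_le : ∀ x, Cfun n b x ≤ Abnd := by
    intro x
    exact iSup₂_le (fun Q _ => hA_le Q)
  -- kmax
  obtain ⟨mA, hmA⟩ := ENNReal.exists_nat_gt hAbndtop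
  set kmax : ℤ := (mA : ℤ) with hkmaxdef
  have hkmax : Abnd < t2 ((kmax:ℤ):ℝ) := by
    calc Abnd < (mA : ℝ≥0∞) := hmA
      _ ≤ 2 ^ mA := by
          exact_mod_cast Nat.cast_le.mpr (Nat.le_of_lt (Nat.lt_two_pow_self (n := mA)))
      _ = t2 ((mA:ℕ):ℝ) := (t2_nat mA).symm
      _ = t2 ((kmax:ℤ):ℝ) := by norm_num [hkmaxdef]
  -- Omega
  set Om : ℤ → Set (EuclideanSpace ℝ (Fin n)) :=
    fun k => ⋃ Q ∈ {Q : DIdx n | t2 (k:ℝ) < Afun n b Q}, dcube n Q with hOmdef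
  have hOm_mem : ∀ k x, x ∈ Om k ↔ ∃ Q, x ∈ dcube n Q ∧ t2 (k:ℝ) < Afun n b Q := by
    intro k x
    simp only [hOmdef, Set.mem_iUnion, Set.mem_setOf_eq, exists_prop]
    tauto
  have hOm_lt_iff : ∀ k x, x ∈ Om k ↔ t2 (k:ℝ) < Cfun n b x := by
    intro k x
    rw [hOm_mem]
    constructor
    · rintro ⟨Q, hx, hA⟩
      exact lt_of_lt_of_le hA (le_iSup₂ (f := fun Q (_ : x ∈ dcube n Q) => Afun n b Q) Q hx)
    · intro h
      rw [Cfun, lt_iSup_iff] at h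
      obtain ⟨Q, hQ⟩ := h
      by_cases hx : x ∈ dcube n Q
      · rw [iSup_pos hx] at hQ
        exact ⟨Q, hx, hQ⟩
      · rw [iSup_neg hx] at hQ
        exact absurd hQ (by simp)
  have hOm_meas : ∀ k, MeasurableSet (Om k) := by
    intro k
    exact MeasurableSet.biUnion (Set.to_countable _) (fun Q _ => measurableSet_dcube Q)
  have hOm_anti : ∀ k l : ℤ, k ≤ l → Om l ⊆ Om k := by
    intro k l hkl x hx
    rw [hOm_lt_iff] at hx ⊢
    exact lt_of_le_of_lt (t2_mono (by exact_mod_cast hkl)) hx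
  have hOm_empty : ∀ k : ℤ, kmax ≤ k → Om k = ∅ := by
    intro k hk
    rw [Set.eq_empty_iff_forall_notMem]
    intro x hx
    rw [hOm_lt_iff] at hx
    exact absurd (lt_of_le_of_lt (hC_le x) (lt_of_lt_of_le hkmax (t2_mono (by exact_mod_cast hk))))
      (not_lt.mpr hx.le)
  -- maximal cubes
  set Mx : ℤ → Set (DIdx n) := fun k =>
    {Q | t2 (k:ℝ) < Afun n b Q ∧
      ∀ Q', t2 (k:ℝ) < Afun n b Q' → dcube n Q ⊆ dcube n Q' → Q' = Q} with hMxdef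
  have hQvol : ∀ (k : ℤ) (Q : DIdx n), t2 (k:ℝ) < Afun n b Q →
      volume (dcube n Q) ≤ t2 (-(k:ℝ)) * B := by
    intro k Q hQ
    have hv0 : volume (dcube n Q) ≠ 0 := (volume_dcube_pos Q).ne'
    have hvt : volume (dcube n Q) ≠ ∞ := volume_dcube_ne_top Q
    have h1 : volume (dcube n Q) * t2 (k:ℝ) ≤ B := by
      calc volume (dcube n Q) * t2 (k:ℝ)
          ≤ volume (dcube n Q) * Afun n b Q := mul_le_mul_right hQ.le _
        _ = volume (dcube n Q) * ((volume (dcube n Q))⁻¹ *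
            ∑' R : {R : DIdx n // dcube n R ⊆ dcube n Q}, b R.1) := by rw [Afun]
        _ = (volume (dcube n Q) * (volume (dcube n Q))⁻¹) *
            ∑' R : {R : DIdx n // dcube n R ⊆ dcube n Q}, b R.1 := by ring
        _ = ∑' R : {R : DIdx n // dcube n R ⊆ dcube n Q}, b R.1 := by
            rw [ENNReal.mul_inv_cancel hv0 hvt, one_mul]
        _ ≤ B := hsum_le Q
    rw [← ENNReal.le_div_iff_mul_le (Or.inl (t2_ne_zero _)) (Or.inl (t2_ne_top _))] at h1
    rw [ENNReal.div_eq_inv_mul, t2_inv] at h1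
    exact h1
  have hMx_cover : ∀ (k : ℤ) (Q : DIdx n), t2 (k:ℝ) < Afun n b Q →
      ∃ Qm ∈ Mx k, dcube n Q ⊆ dcube n Qm := by
    intro k Q hQ
    obtain ⟨Qm, hQm, hsub, hmaxl⟩ := exists_maximal hn {Q' : DIdx n | t2 (k:ℝ) < Afun n b Q'}
      (ENNReal.mul_ne_top (t2_ne_top _) hBtop) (fun Q' hQ' => hQvol k Q' hQ') hQ
    exact ⟨Qm, ⟨hQm, fun Q' h1 h2 => hmaxl Q' h1 h2⟩, hsub⟩
  have hMx_disj : ∀ k : ℤ, (Mx k).PairwiseDisjoint (dcube n) := by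
    intro k Q hQ Q' hQ' hne
    by_contra hd
    rw [Set.not_disjoint_iff_nonempty_inter] at hd
    rcases dcube_subset_or_disjoint Q Q' with h | h | h
    · exact hne (hQ.2 Q' hQ'.1 h).symm
    · exact hne (hQ'.2 Q hQ.1 h)
    · exact (Set.not_disjoint_iff_nonempty_inter.mpr hd) h
  have hMx_sub : ∀ (k : ℤ) (Q : DIdx n), Q ∈ Mx k → dcube n Q ⊆ Om k := by
    intro k Q hQ x hx
    rw [hOm_mem]
    exact ⟨Q, hx, hQ.1⟩
  have hOm_eq : ∀ k, Om k = ⋃ Q ∈ Mx k, dcube n Q := by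
    intro k
    apply Set.Subset.antisymm
    · intro x hx
      rw [hOm_mem] at hx
      obtain ⟨Q, hx, hA⟩ := hx
      obtain ⟨Qm, hQm, hsub⟩ := hMx_cover k Q hA
      exact Set.mem_biUnion hQm (hsub hx)
    · intro x hx
      obtain ⟨Q, hQ, hxQ⟩ := Set.mem_iUnion₂.mp hx
      exact hMx_sub k Q hQ hxQ
  have hOm_vol : ∀ k, volume (Om k) = ∑' Q : Mx k, volume (dcube n Q.1) := by
    intro k
    rw [hOm_eq]
    exact measure_biUnion (Set.to_countable _) (hMx_disj k) (fun Q _ => measurableSet_dcube Q)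
  have hOm_volbnd : ∀ k, volume (Om k) ≤ (F₀.card : ℝ≥0∞) * (t2 (-(k:ℝ)) * B) := by
    intro k
    have hsub : Om k ⊆ ⋃ R ∈ (F₀ : Set (DIdx n)),
        ⋃ Q ∈ {Q : DIdx n | t2 (k:ℝ) < Afun n b Q ∧ dcube n R ⊆ dcube n Q}, dcube n Q := by
      intro x hx
      rw [hOm_mem] at hx
      obtain ⟨Q, hxQ, hA⟩ := hx
      have hA0 : Afun n b Q ≠ 0 := fun h => by
        rw [h] at hA; exact absurd hA (by simp)
      obtain ⟨R, hRF, hRQ⟩ := hA_mem Q hA0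
      exact Set.mem_biUnion hRF (Set.mem_biUnion ⟨hA, hRQ⟩ hxQ)
    calc volume (Om k) ≤ ∑ R ∈ F₀, volume (⋃ Q ∈ {Q : DIdx n |
          t2 (k:ℝ) < Afun n b Q ∧ dcube n R ⊆ dcube n Q}, dcube n Q) := by
          refine le_trans (measure_mono hsub) ?_
          exact measure_biUnion_finset_le _ _
      _ ≤ ∑ _R ∈ F₀, t2 (-(k:ℝ)) * B := by
          apply Finset.sum_le_sum
          intro R _
          rw [Set.biUnion_eq_iUnion]
          rw [Directed.measure_iUnion (by
            rintro ⟨Q, hQ1, hQ2⟩ ⟨Q', hQ'1, hQ'2⟩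
            have hnd : ¬ Disjoint (dcube n Q) (dcube n Q') := by
              obtain ⟨x, hx⟩ := dcube_nonempty R
              exact Set.not_disjoint_iff.mpr ⟨x, hQ2 hx, hQ'2 hx⟩
            rcases dcube_subset_or_disjoint Q Q' with h | h | h
            · exact ⟨⟨Q', hQ'1, hQ'2⟩, h, subset_rfl⟩
            · exact ⟨⟨Q, hQ1, hQ2⟩, subset_rfl, h⟩
            · exact absurd h hnd)]
          exact iSup_le (fun Q => hQvol k Q.1 Q.2.1)
      _ = (F₀.card : ℝ≥0∞) * (t2 (-(k:ℝ)) * B) := by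
          rw [Finset.sum_const, nsmul_eq_mul]
  -- D
  set D : ℝ≥0∞ := ∑' k : ℤ, t2 ((k:ℝ) * qr) * volume (Om k) with hDdef
  have hterm_bnd : ∀ k : ℤ, t2 ((k:ℝ) * qr) * volume (Om k) ≤
      (if k ≤ kmax - 1 then ((F₀.card : ℝ≥0∞) * B) * t2 ((k:ℝ) * (qr-1)) else 0) := by
    intro k
    by_cases hk : k ≤ kmax - 1
    · rw [if_pos hk]
      calc t2 ((k:ℝ) * qr) * volume (Om k)
          ≤ t2 ((k:ℝ) * qr) * ((F₀.card : ℝ≥0∞) * (t2 (-(k:ℝ)) * B)) :=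
            mul_le_mul_right (hOm_volbnd k) _
        _ = ((F₀.card : ℝ≥0∞) * B) * (t2 ((k:ℝ) * qr) * t2 (-(k:ℝ))) := by ring
        _ = ((F₀.card : ℝ≥0∞) * B) * t2 ((k:ℝ) * (qr-1)) := by
            rw [← t2_add]
            congr 2
            ring
    · rw [if_neg hk]
      have : Om k = ∅ := hOm_empty k (by omega)
      rw [this]
      simp
  have hD_top : D ≠ ∞ := by
    have h1 : D ≤ ((F₀.card : ℝ≥0∞) * B) *
        ∑' k : ℤ, (if k ≤ kmax - 1 then t2 ((k:ℝ) * (qr-1)) else 0) := by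
      rw [hDdef, ← ENNReal.tsum_mul_left]
      apply ENNReal.tsum_le_tsum
      intro k
      refine le_trans (hterm_bnd k) ?_
      by_cases hk : k ≤ kmax - 1 <;> simp [hk]
    rw [geo_sum (by linarith) (kmax - 1)] at h1
    exact (lt_of_le_of_lt h1 (by
      apply ENNReal.mul_lt_top
      · exact ENNReal.mul_lt_top (by simp) (lt_top_iff_ne_top.mpr hBtop)
      · exact ENNReal.mul_lt_top (lt_top_iff_ne_top.mpr (t2_ne_top _))
          (lt_top_iff_ne_top.mpr hσtop))).ne
  -- integral of Carleson functional
  have hInt_C : (∫⁻ x, (Cfun n b x) ^ qr) ≤ t2 qr * D := by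
    have hpt : ∀ x, (Cfun n b x) ^ qr ≤
        ∑' m : ℤ, (Om m \ Om (m+1)).indicator (fun _ => t2 (((m:ℝ)+1) * qr)) x := by
      intro x
      rcases eq_or_ne (Cfun n b x) 0 with h0 | h0
      · rw [h0, ENNReal.zero_rpow_of_pos hqr0]
        exact zero_le
      have hPex : ∃ k : ℤ, x ∈ Om k := by
        obtain ⟨N, hN⟩ := ENNReal.exists_inv_two_pow_lt h0
        refine ⟨-(N:ℤ), ?_⟩
        rw [hOm_lt_iff]
        calc t2 ((-(N:ℤ):ℤ):ℝ) = t2 (-(N:ℝ)) := by norm_num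
          _ = (t2 ((N:ℕ):ℝ))⁻¹ := by rw [t2_inv]
          _ = (2^N : ℝ≥0∞)⁻¹ := by rw [t2_nat]
          _ = 2⁻¹ ^ N := by rw [ENNReal.inv_pow]
          _ < Cfun n b x := hN
      have hPbd : ∃ bnd : ℤ, ∀ z : ℤ, x ∈ Om z → z ≤ bnd := by
        refine ⟨kmax - 1, fun z hz => ?_⟩
        by_contra hlt
        push_neg at hlt
        rw [hOm_empty z (by omega)] at hz
        exact hz
      obtain ⟨m, hm, hgreat⟩ := Int.exists_greatest_of_bdd hPbd hPex
      have hnot : x ∉ Om (m+1) := fun h => by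
        have := hgreat _ h
        omega
      have hub : Cfun n b x ≤ t2 ((m:ℝ)+1) := by
        rw [hOm_lt_iff] at hnot
        push_neg at hnot
        calc Cfun n b x ≤ t2 (((m+1:ℤ)):ℝ) := hnot
          _ = t2 ((m:ℝ)+1) := by norm_num
      calc (Cfun n b x) ^ qr ≤ (t2 ((m:ℝ)+1)) ^ qr := ENNReal.rpow_le_rpow hub hqr0.le
        _ = t2 (((m:ℝ)+1) * qr) := t2_rpow _ _
        _ = (Om m \ Om (m+1)).indicator (fun _ => t2 (((m:ℝ)+1) * qr)) x := by
            rw [Set.indicator_of_mem (show x ∈ Om m \ Om (m+1) from ⟨hm, hnot⟩)]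
        _ ≤ _ := ENNReal.le_tsum m
    calc (∫⁻ x, (Cfun n b x) ^ qr)
        ≤ ∫⁻ x, ∑' m : ℤ, (Om m \ Om (m+1)).indicator (fun _ => t2 (((m:ℝ)+1) * qr)) x :=
          lintegral_mono hpt
      _ = ∑' m : ℤ, ∫⁻ x, (Om m \ Om (m+1)).indicator (fun _ => t2 (((m:ℝ)+1) * qr)) x := by
          apply lintegral_tsum
          intro m
          exact (measurable_const.indicator ((hOm_meas m).diff (hOm_meas (m+1)))).aemeasurable
      _ = ∑' m : ℤ, t2 (((m:ℝ)+1) * qr) * volume (Om m \ Om (m+1)) := by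
          apply tsum_congr
          intro m
          rw [lintegral_indicator ((hOm_meas m).diff (hOm_meas (m+1)))]
          simp
      _ ≤ ∑' m : ℤ, t2 (((m:ℝ)+1) * qr) * volume (Om m) := by
          apply ENNReal.tsum_le_tsum
          intro m
          exact mul_le_mul_right (measure_mono Set.diff_subset) _
      _ = t2 qr * D := by
          rw [hDdef, ← ENNReal.tsum_mul_left]
          apply tsum_congr
          intro m
          rw [← mul_assoc, ← t2_add]
          congr 2
          ring

  -- case D = 0
  by_cases hD0 : D = 0
  · refine ⟨0, by simp, ?_, ?_⟩
    · have hz : (NN n 0) = fun _ => 0 := by funext x; simp [NN]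
      rw [hz]
      simp [ENNReal.zero_rpow_of_pos hpr0, ENNReal.zero_rpow_of_pos (inv_pos.mpr hpr0)]
    · have h1 : (∫⁻ x, (Cfun n b x) ^ qr) = 0 := by
        refine le_antisymm ?_ (zero_le)
        calc (∫⁻ x, (Cfun n b x) ^ qr) ≤ t2 qr * D := hInt_C
          _ = 0 := by rw [hD0, mul_zero]
      rw [h1, ENNReal.zero_rpow_of_pos (inv_pos.mpr hqr0)]
      exact zero_le
  -- main construction
  have hD0' : D ≠ 0 := hD0
  set Dp : ℝ≥0∞ := D ^ pr⁻¹ with hDpdef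
  have hDp0 : Dp ≠ 0 := by
    rw [hDpdef]
    intro h
    rw [ENNReal.rpow_eq_zero_iff] at h
    rcases h with ⟨h, -⟩ | ⟨h, -⟩
    exacts [hD0' h, hD_top h]
  have hDpt : Dp ≠ ∞ := by
    rw [hDpdef]
    intro h
    rw [ENNReal.rpow_eq_top_iff] at h
    rcases h with ⟨h, -⟩ | ⟨h, -⟩
    exacts [hD0' h, hD_top h]
  set t : ℝ≥0∞ := σ⁻¹ * Dp⁻¹ with htdef
  have ht_top : t ≠ ∞ :=
    ENNReal.mul_ne_top (ENNReal.inv_ne_top.mpr hσ0) (ENNReal.inv_ne_top.mpr hDp0)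
  set c : ℤ → ℝ≥0∞ := fun k => t * t2 ((k:ℝ) * (qr-1)) with hcdef
  set Mind : ℤ → DIdx n → ℝ≥0∞ := fun k R =>
    if ∃ Q ∈ Mx k, dcube n R ⊆ dcube n Q then 1 else 0 with hMinddef
  set a : DIdx n → ℝ≥0∞ := fun R => ∑' k : ℤ, c k * Mind k R with hadef
  have hMind_le_one : ∀ (k : ℤ) (R : DIdx n), Mind k R ≤ 1 := by
    intro k R
    simp only [hMinddef]
    split <;> norm_num
  have hMind_hi : ∀ (k : ℤ) (R : DIdx n), kmax ≤ k → Mind k R = 0 := by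
    intro k R hk
    simp only [hMinddef]
    rw [if_neg]
    rintro ⟨Q, hQ, -⟩
    have h3 : Afun n b Q < t2 (k:ℝ) :=
      lt_of_le_of_lt (hA_le Q) (lt_of_lt_of_le hkmax (t2_mono (by exact_mod_cast hk)))
    exact absurd hQ.1 (not_lt.mpr h3.le)
  have ha_le : ∀ R, a R ≤ t * (t2 (((kmax-1:ℤ):ℝ) * (qr-1)) * σ) := by
    intro R
    simp only [hadef]
    calc ∑' k : ℤ, c k * Mind k R
        ≤ ∑' k : ℤ, t * (if k ≤ kmax - 1 then t2 ((k:ℝ)*(qr-1)) else 0) := by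
          apply ENNReal.tsum_le_tsum
          intro k
          by_cases hk : k ≤ kmax - 1
          · rw [if_pos hk]
            calc c k * Mind k R ≤ c k * 1 := mul_le_mul_right (hMind_le_one k R) _
              _ = t * t2 ((k:ℝ)*(qr-1)) := by rw [mul_one, hcdef]
          · rw [if_neg hk, hMind_hi k R (by omega), mul_zero, mul_zero]
      _ = t * ∑' k : ℤ, (if k ≤ kmax - 1 then t2 ((k:ℝ)*(qr-1)) else 0) :=
          ENNReal.tsum_mul_left
      _ = t * (t2 (((kmax-1:ℤ):ℝ) * (qr-1)) * σ) := by
          rw [geo_sum (by linarith) (kmax - 1), hσdef]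
  have ha_top : ∀ R, a R ≠ ∞ := by
    intro R
    refine (lt_of_le_of_lt (ha_le R) ?_).ne
    exact ENNReal.mul_lt_top (lt_top_iff_ne_top.mpr ht_top)
      (ENNReal.mul_lt_top (lt_top_iff_ne_top.mpr (t2_ne_top _)) (lt_top_iff_ne_top.mpr hσtop))
  -- pairing lower bound
  have hQ_lower : ∀ (k : ℤ) (Q : DIdx n), t2 (k:ℝ) < Afun n b Q →
      t2 (k:ℝ) * volume (dcube n Q) ≤
        ∑' R : {R : DIdx n // dcube n R ⊆ dcube n Q}, b R.1 := by
    intro k Q hQ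
    have hv0 : volume (dcube n Q) ≠ 0 := (volume_dcube_pos Q).ne'
    have hvt : volume (dcube n Q) ≠ ∞ := volume_dcube_ne_top Q
    calc t2 (k:ℝ) * volume (dcube n Q)
        ≤ Afun n b Q * volume (dcube n Q) := mul_le_mul_left hQ.le _
      _ = (∑' R : {R : DIdx n // dcube n R ⊆ dcube n Q}, b R.1) *
          ((volume (dcube n Q))⁻¹ * volume (dcube n Q)) := by rw [Afun]; ring
      _ = ∑' R : {R : DIdx n // dcube n R ⊆ dcube n Q}, b R.1 := by
          rw [ENNReal.inv_mul_cancel hv0 hvt, mul_one]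
  have hMk_claim : ∀ k : ℤ, t2 (k:ℝ) * volume (Om k) ≤ ∑' R, Mind k R * b R := by
    intro k
    calc t2 (k:ℝ) * volume (Om k)
        = ∑' Q : Mx k, t2 (k:ℝ) * volume (dcube n Q.1) := by
          rw [hOm_vol k, ENNReal.tsum_mul_left]
      _ ≤ ∑' Q : Mx k, ∑' R : {R : DIdx n // dcube n R ⊆ dcube n Q.1}, b R.1 :=
          ENNReal.tsum_le_tsum (fun Q => hQ_lower k Q.1 Q.2.1)
      _ = ∑' Q : Mx k, ∑' R : DIdx n,
          Set.indicator {R : DIdx n | dcube n R ⊆ dcube n Q.1} b R :=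
          tsum_congr (fun Q => tsum_subtype _ b)
      _ = ∑' R : DIdx n, ∑' Q : Mx k,
          Set.indicator {R' : DIdx n | dcube n R' ⊆ dcube n Q.1} b R :=
          ENNReal.tsum_comm
      _ ≤ ∑' R, Mind k R * b R := by
          apply ENNReal.tsum_le_tsum
          intro R
          by_cases h : ∃ Q ∈ Mx k, dcube n R ⊆ dcube n Q
          · obtain ⟨Q₀, hQ₀, hsub₀⟩ := h
            have huniq : ∀ Q' : Mx k, Q' ≠ ⟨Q₀, hQ₀⟩ →
                Set.indicator {R' : DIdx n | dcube n R' ⊆ dcube n Q'.1} b R = 0 := by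
              intro Q' hne
              rw [Set.indicator_apply_eq_zero]
              intro hsub'
              exfalso
              have hQne : Q'.1 ≠ Q₀ := fun h' => hne (Subtype.ext h')
              have hdisj := hMx_disj k Q'.2 hQ₀ hQne
              obtain ⟨x, hx⟩ := dcube_nonempty R
              exact Set.not_disjoint_iff.mpr ⟨x, hsub' hx, hsub₀ hx⟩ hdisj
            rw [tsum_eq_single (⟨Q₀, hQ₀⟩ : Mx k) huniq]
            rw [Set.indicator_of_mem (show R ∈ {R' : DIdx n | dcube n R' ⊆ dcube n Q₀} from hsub₀)]
            have hM1 : Mind k R = 1 := by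
              simp only [hMinddef]
              rw [if_pos ⟨Q₀, hQ₀, hsub₀⟩]
            rw [hM1, one_mul]
          · have hz : ∀ Q' : Mx k,
                Set.indicator {R' : DIdx n | dcube n R' ⊆ dcube n Q'.1} b R = 0 := by
              intro Q'
              rw [Set.indicator_apply_eq_zero]
              intro hsub'
              exact absurd ⟨Q'.1, Q'.2, hsub'⟩ h
            rw [tsum_congr hz]
            simp
  have hpair : t * D ≤ ∑' R, a R * b R := by
    have h1 : ∑' R, a R * b R = ∑' k : ℤ, c k * ∑' R, Mind k R * b R := by
      calc ∑' R, a R * b R = ∑' R, ∑' k : ℤ, c k * Mind k R * b R := by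
            apply tsum_congr
            intro R
            simp only [hadef]
            exact ENNReal.tsum_mul_right.symm
        _ = ∑' k : ℤ, ∑' R, c k * Mind k R * b R := ENNReal.tsum_comm
        _ = ∑' k : ℤ, c k * ∑' R, Mind k R * b R := by
            apply tsum_congr
            intro k
            rw [← ENNReal.tsum_mul_left]
            apply tsum_congr
            intro R
            ring
    rw [h1]
    calc t * D = ∑' k : ℤ, t * (t2 ((k:ℝ)*qr) * volume (Om k)) := by
          rw [hDdef, ← ENNReal.tsum_mul_left]
      _ ≤ ∑' k : ℤ, c k * ∑' R, Mind k R * b R := by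
          apply ENNReal.tsum_le_tsum
          intro k
          have ht2 : t2 ((k:ℝ)*(qr-1)) * t2 ((k:ℝ)) = t2 ((k:ℝ)*qr) := by
            rw [← t2_add]
            congr 1
            ring
          calc t * (t2 ((k:ℝ)*qr) * volume (Om k))
              = c k * (t2 ((k:ℝ)) * volume (Om k)) := by
                simp only [hcdef]
                rw [← ht2]
                ring
            _ ≤ c k * ∑' R, Mind k R * b R := mul_le_mul_right (hMk_claim k) _
  -- N bound
  set φ : EuclideanSpace ℝ (Fin n) → ℝ≥0∞ :=
    fun x => ∑' k : ℤ, c k * (Om k).indicator 1 x with hφdef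
  have hN_le : ∀ x, NN n a x ≤ φ x := by
    intro x
    apply iSup₂_le
    intro R hx
    simp only [hadef, hφdef]
    apply ENNReal.tsum_le_tsum
    intro k
    apply mul_le_mul_right
    simp only [hMinddef]
    split
    case isTrue h =>
      obtain ⟨Q, hQ, hsub⟩ := h
      have hx2 : x ∈ Om k := hMx_sub k Q hQ (hsub hx)
      simp [Set.indicator_of_mem hx2]
    case isFalse h => exact zero_le
  have hgreatest : ∀ x, (∃ k : ℤ, x ∈ Om k) →
      ∃ m : ℤ, x ∈ Om m ∧ ∀ z : ℤ, x ∈ Om z → z ≤ m := by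
    intro x hex
    obtain ⟨m, h1, h2⟩ := Int.exists_greatest_of_bdd
      (⟨kmax - 1, fun z hz => by
        by_contra hlt
        push_neg at hlt
        rw [hOm_empty z (by omega)] at hz
        exact hz⟩ : ∃ bnd : ℤ, ∀ z : ℤ, x ∈ Om z → z ≤ bnd) hex
    exact ⟨m, h1, h2⟩
  have hφ_val : ∀ x (m : ℤ), x ∈ Om m → (∀ z : ℤ, x ∈ Om z → z ≤ m) →
      φ x = t * (t2 ((m:ℝ) * (qr-1)) * σ) := by
    intro x m hm hgr
    simp only [hφdef]
    have hterm : ∀ k : ℤ, c k * (Om k).indicator 1 x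
        = t * (if k ≤ m then t2 ((k:ℝ)*(qr-1)) else 0) := by
      intro k
      by_cases hk : k ≤ m
      · rw [if_pos hk, Set.indicator_of_mem (hOm_anti k m hk hm)]
        simp [hcdef]
      · rw [if_neg hk, Set.indicator_of_notMem (fun h => hk (hgr k h)), mul_zero, mul_zero]
    rw [tsum_congr hterm, ENNReal.tsum_mul_left, geo_sum (by linarith) m, hσdef]
  have hφ_zero : ∀ x, (∀ k : ℤ, x ∉ Om k) → φ x = 0 := by
    intro x h
    simp only [hφdef]
    rw [ENNReal.tsum_eq_zero]
    intro k
    rw [Set.indicator_of_notMem (h k), mul_zero]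
  have hφLp : (∫⁻ x, (φ x) ^ pr) ≤ (t * σ) ^ pr * D := by
    have hpt : ∀ x, (φ x) ^ pr ≤ ∑' m : ℤ, (Om m \ Om (m+1)).indicator
        (fun _ => (t * σ * t2 ((m:ℝ)*(qr-1))) ^ pr) x := by
      intro x
      by_cases hex : ∃ k : ℤ, x ∈ Om k
      · obtain ⟨m, hm, hgr⟩ := hgreatest x hex
        have hnot : x ∉ Om (m+1) := fun h => by
          have := hgr _ h
          omega
        calc (φ x) ^ pr = (t * σ * t2 ((m:ℝ)*(qr-1))) ^ pr := by
              rw [hφ_val x m hm hgr]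
              congr 1
              ring
          _ = (Om m \ Om (m+1)).indicator
              (fun _ => (t * σ * t2 ((m:ℝ)*(qr-1))) ^ pr) x := by
              rw [Set.indicator_of_mem (show x ∈ Om m \ Om (m+1) from ⟨hm, hnot⟩)]
          _ ≤ _ := ENNReal.le_tsum m
      · push_neg at hex
        rw [hφ_zero x hex, ENNReal.zero_rpow_of_pos hpr0]
        exact zero_le
    calc (∫⁻ x, (φ x) ^ pr)
        ≤ ∫⁻ x, ∑' m : ℤ, (Om m \ Om (m+1)).indicator
            (fun _ => (t * σ * t2 ((m:ℝ)*(qr-1))) ^ pr) x := lintegral_mono hpt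
      _ = ∑' m : ℤ, ∫⁻ x, (Om m \ Om (m+1)).indicator
            (fun _ => (t * σ * t2 ((m:ℝ)*(qr-1))) ^ pr) x := by
          apply lintegral_tsum
          intro m
          exact (measurable_const.indicator ((hOm_meas m).diff (hOm_meas (m+1)))).aemeasurable
      _ = ∑' m : ℤ, (t * σ * t2 ((m:ℝ)*(qr-1))) ^ pr * volume (Om m \ Om (m+1)) := by
          apply tsum_congr
          intro m
          rw [lintegral_indicator ((hOm_meas m).diff (hOm_meas (m+1)))]
          simp
      _ ≤ ∑' m : ℤ, (t * σ * t2 ((m:ℝ)*(qr-1))) ^ pr * volume (Om m) := by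
          apply ENNReal.tsum_le_tsum
          intro m
          exact mul_le_mul_right (measure_mono Set.diff_subset) _
      _ = (t * σ) ^ pr * D := by
          rw [hDdef, ← ENNReal.tsum_mul_left]
          apply tsum_congr
          intro m
          rw [ENNReal.mul_rpow_of_nonneg _ _ hpr0.le, t2_rpow]
          have hexp : ((m:ℝ)*(qr-1))*pr = (m:ℝ)*qr := by
            rw [mul_assoc, hconj]
          rw [hexp, mul_assoc]
  have hNLp : (∫⁻ x, (NN n a x) ^ pr) ^ pr⁻¹ ≤ 1 := by
    have h1 : (∫⁻ x, (NN n a x) ^ pr) ≤ (t * σ) ^ pr * D :=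
      le_trans (lintegral_mono (fun x => ENNReal.rpow_le_rpow (hN_le x) hpr0.le)) hφLp
    have h2 : ((t * σ) ^ pr * D) ^ pr⁻¹ = (t * σ) * Dp := by
      rw [ENNReal.mul_rpow_of_nonneg _ _ (inv_pos.mpr hpr0).le, ← ENNReal.rpow_mul,
        mul_inv_cancel₀ hpr0.ne', ENNReal.rpow_one, hDpdef]
    have h3 : (t * σ) * Dp = 1 := by
      rw [htdef]
      calc σ⁻¹ * Dp⁻¹ * σ * Dp = (σ⁻¹ * σ) * (Dp⁻¹ * Dp) := by ring
        _ = 1 := by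
          rw [ENNReal.inv_mul_cancel hσ0 hσtop, ENNReal.inv_mul_cancel hDp0 hDpt, one_mul]
    calc (∫⁻ x, (NN n a x) ^ pr) ^ pr⁻¹
        ≤ ((t * σ) ^ pr * D) ^ pr⁻¹ := ENNReal.rpow_le_rpow h1 (inv_pos.mpr hpr0).le
      _ = 1 := by rw [h2, h3]
  -- final
  have hfinal : (∫⁻ x, (Cfun n b x) ^ qr) ^ qr⁻¹ ≤ 2 * σ * ∑' R, a R * b R := by
    have h1 : (∫⁻ x, (Cfun n b x) ^ qr) ^ qr⁻¹ ≤ (t2 qr * D) ^ qr⁻¹ :=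
      ENNReal.rpow_le_rpow hInt_C (inv_pos.mpr hqr0).le
    have h2 : (t2 qr * D) ^ qr⁻¹ = 2 * D ^ qr⁻¹ := by
      rw [ENNReal.mul_rpow_of_nonneg _ _ (inv_pos.mpr hqr0).le, t2_rpow,
        mul_inv_cancel₀ hqr0.ne', t2_one]
    have h3 : D ^ qr⁻¹ = σ * (t * D) := by
      have hD1 : D = Dp * D ^ qr⁻¹ := by
        rw [hDpdef, ← ENNReal.rpow_add _ _ hD0' hD_top, hconj2, ENNReal.rpow_one]
      calc D ^ qr⁻¹ = (σ * σ⁻¹) * ((Dp⁻¹ * Dp) * D ^ qr⁻¹) := by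
            rw [ENNReal.mul_inv_cancel hσ0 hσtop, ENNReal.inv_mul_cancel hDp0 hDpt,
              one_mul, one_mul]
        _ = σ * (t * (Dp * D ^ qr⁻¹)) := by rw [htdef]; ring
        _ = σ * (t * D) := by rw [← hD1]
    calc (∫⁻ x, (Cfun n b x) ^ qr) ^ qr⁻¹ ≤ 2 * D ^ qr⁻¹ := by rw [← h2]; exact h1
      _ = 2 * σ * (t * D) := by rw [h3]; ring
      _ ≤ 2 * σ * ∑' R, a R * b R := mul_le_mul_right hpair _
  exact ⟨a, ha_top, hNLp, hfinal⟩


lemma ofReal_norm_eq_coe_nnnorm {E : Type*} [NormedAddCommGroup E] (x : E) :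
    ENNReal.ofReal ‖x‖ = (‖x‖₊ : ℝ≥0∞) :=
  ENNReal.ofReal_coe_nnreal (p := ‖x‖₊)

-- ===== eLp helpers and the transfer lemma =====

lemma eLp_mono {α : Type*} [MeasurableSpace α] (p : ℝ≥0∞) {F G : α → ℝ≥0∞}
    (μ : Measure α) (h : ∀ x, F x ≤ G x) : eLp p F μ ≤ eLp p G μ := by
  rw [eLp, eLp]
  split
  · exact essSup_mono_ae (Filter.Eventually.of_forall h)
  · exact ENNReal.rpow_le_rpow
      (lintegral_mono fun x => ENNReal.rpow_le_rpow (h x) ENNReal.toReal_nonneg)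
      (by positivity)

lemma eLp_const_mul {α : Type*} [MeasurableSpace α] {p : ℝ≥0∞} (hp0 : p ≠ 0) (hptop : p ≠ ∞)
    {c : ℝ≥0∞} (hc : c ≠ ∞) (F : α → ℝ≥0∞) (μ : Measure α) :
    eLp p (fun x => c * F x) μ = c * eLp p F μ := by
  rw [eLp, eLp, if_neg hptop, if_neg hptop]
  have hpr : 0 < p.toReal := ENNReal.toReal_pos hp0 hptop
  have h1 : (∫⁻ x, (c * F x) ^ p.toReal ∂μ) = c ^ p.toReal * ∫⁻ x, (F x) ^ p.toReal ∂μ := by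
    rw [← lintegral_const_mul' _ _ (ENNReal.rpow_lt_top_of_nonneg hpr.le hc).ne]
    apply lintegral_congr
    intro x
    rw [ENNReal.mul_rpow_of_nonneg _ _ hpr.le]
  rw [h1, ENNReal.mul_rpow_of_nonneg _ _ (by positivity : (0:ℝ) ≤ p.toReal⁻¹),
    ← ENNReal.rpow_mul, mul_inv_cancel₀ hpr.ne', ENNReal.rpow_one]

/-- The key transfer lemma: scalar weights to vector test functions. -/
theorem transfer {n : ℕ} {p : ℝ≥0∞} (hp1 : 1 ≤ p) (hptop : p ≠ ∞)
    {C₀ : ℝ} (hC₀ : 0 < C₀)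
    (X Y : DIdx n → Type)
    [∀ Q, NormedAddCommGroup (X Q)] [∀ Q, NormedSpace ℝ (X Q)]
    [∀ Q, NormedAddCommGroup (Y Q)] [∀ Q, NormedSpace ℝ (Y Q)]
    (pair : ∀ Q, X Q →ₗ[ℝ] Y Q →ₗ[ℝ] ℝ)
    (hdual : ∀ Q, IsDuality (pair Q) C₀)
    (g : ∀ Q, Y Q)
    (a : DIdx n → ℝ≥0∞) (ha : ∀ R, a R ≠ ∞) (F : Finset (DIdx n))
    (hNa : eLp p (NN n a) volume ≤ 1) :
    ∑ R ∈ F, a R * (‖g R‖₊ : ℝ≥0∞) ≤ ENNReal.ofReal (2 * C₀) *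
      ⨆ (f : ∀ Q, X Q) (_ : eLp p (NX f) volume = 1),
        ENNReal.ofReal (∑' Q, pair Q (f Q) (g Q)) := by
  classical
  have hp0 : p ≠ 0 := fun h => by rw [h] at hp1; exact absurd hp1 (by norm_num)
  have hpr0 : 0 < p.toReal := ENNReal.toReal_pos hp0 hptop
  by_cases hP0 : ∑ R ∈ F, a R * (‖g R‖₊ : ℝ≥0∞) = 0
  · rw [hP0]; exact zero_le
  -- choose near-optimal unit vectors
  have hchoice : ∀ R : DIdx n, ∃ v : X R, ((a R ≠ 0 ∧ g R ≠ 0 ∧ R ∈ F) →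
      (‖v‖ = 1 ∧ ‖g R‖ / (2*C₀) ≤ (pair R) v (g R))) := by
    intro R
    by_cases hcond : a R ≠ 0 ∧ g R ≠ 0 ∧ R ∈ F
    · obtain ⟨ha0, hg0, hF⟩ := hcond
      have hd := (hdual R).2.2 (g R)
      set S := (fun f => (pair R) f (g R)) '' {f | ‖f‖ = 1} with hS
      have hgpos : 0 < ‖g R‖ := norm_pos_iff.mpr hg0
      have hSlt : ‖g R‖ / (2*C₀) < sSup S := by
        have h1 : ‖g R‖ / C₀ ≤ sSup S := by
          rw [div_le_iff₀ hC₀]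
          calc ‖g R‖ ≤ C₀ * sSup S := hd
            _ = sSup S * C₀ := mul_comm _ _
        have h2 : ‖g R‖/(2*C₀) < ‖g R‖/C₀ := by
          apply div_lt_div_of_pos_left hgpos hC₀
          linarith
        linarith
      have hSne : S.Nonempty := by
        by_contra h
        rw [Set.not_nonempty_iff_eq_empty] at h
        rw [h, Real.sSup_empty] at hSlt
        have : 0 < ‖g R‖ / (2*C₀) := by positivity
        linarith
      obtain ⟨y, hyS, hy⟩ := exists_lt_of_lt_csSup hSne hSlt
      obtain ⟨v, hv1, hv2⟩ := hyS
      refine ⟨v, fun _ => ⟨hv1, ?_⟩⟩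
      have hv2' : ((pair R) v) (g R) = y := hv2
      rw [hv2']
      exact hy.le
    · exact ⟨0, fun h => absurd h hcond⟩
  choose u hu using hchoice
  set f : ∀ Q, X Q := fun Q =>
    if h : a Q ≠ 0 ∧ g Q ≠ 0 ∧ Q ∈ F then (a Q).toReal • u Q else 0 with hfdef
  have hfnorm : ∀ Q, (a Q ≠ 0 ∧ g Q ≠ 0 ∧ Q ∈ F) → (‖f Q‖₊ : ℝ≥0∞) = a Q := by
    intro Q h
    simp only [hfdef]
    rw [dif_pos h, ← ofReal_norm_eq_coe_nnnorm, norm_smul,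
      Real.norm_of_nonneg ENNReal.toReal_nonneg, (hu Q h).1, mul_one,
      ENNReal.ofReal_toReal (ha Q)]
  have hfnorm_le : ∀ Q, (‖f Q‖₊ : ℝ≥0∞) ≤ a Q := by
    intro Q
    by_cases h : a Q ≠ 0 ∧ g Q ≠ 0 ∧ Q ∈ F
    · exact (hfnorm Q h).le
    · simp only [hfdef]
      rw [dif_neg h]
      simp
  have hNX_le : ∀ x, NX f x ≤ NN n a x := by
    intro x
    exact iSup₂_mono (fun Q _ => hfnorm_le Q)
  have heLp_le : eLp p (NX f) volume ≤ 1 :=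
    le_trans (eLp_mono p volume hNX_le) hNa
  set s := eLp p (NX f) volume with hsdef
  obtain ⟨R₀, hR₀F, hR₀ne⟩ := Finset.exists_ne_zero_of_sum_ne_zero hP0
  have hcondR₀ : a R₀ ≠ 0 ∧ g R₀ ≠ 0 ∧ R₀ ∈ F := by
    refine ⟨?_, ?_, hR₀F⟩
    · intro h; rw [h, zero_mul] at hR₀ne; exact hR₀ne rfl
    · intro h
      rw [h] at hR₀ne
      simp at hR₀ne
  have hs0 : s ≠ 0 := by
    intro hs
    rw [hsdef, eLp, if_neg hptop] at hs
    have hint0 : (∫⁻ x, (NX f x) ^ p.toReal) = 0 := by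
      by_contra hne
      rw [ENNReal.rpow_eq_zero_iff] at hs
      rcases hs with ⟨h, -⟩ | ⟨-, h⟩
      · exact hne h
      · exact absurd h (not_lt.mpr (by positivity))
    have hlow : (a R₀) ^ p.toReal * volume (dcube n R₀) ≤ ∫⁻ x, (NX f x) ^ p.toReal := by
      calc (a R₀) ^ p.toReal * volume (dcube n R₀)
          = ∫⁻ x, (dcube n R₀).indicator (fun _ => (a R₀) ^ p.toReal) x := by
            rw [lintegral_indicator (measurableSet_dcube R₀)]
            simp
        _ ≤ ∫⁻ x, (NX f x) ^ p.toReal := by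
            apply lintegral_mono
            intro x
            by_cases hx : x ∈ dcube n R₀
            · rw [Set.indicator_of_mem hx]
              apply ENNReal.rpow_le_rpow _ hpr0.le
              rw [← hfnorm R₀ hcondR₀]
              exact le_iSup₂ (f := fun Q (_ : x ∈ dcube n Q) => (‖f Q‖₊ : ℝ≥0∞)) R₀ hx
            · rw [Set.indicator_of_notMem hx]
              exact zero_le
    rw [hint0] at hlow
    have : (a R₀) ^ p.toReal * volume (dcube n R₀) ≠ 0 := by
      apply mul_ne_zero
      · intro h
        rw [ENNReal.rpow_eq_zero_iff] at h
        rcases h with ⟨h, -⟩ | ⟨-, h⟩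
        · exact hcondR₀.1 h
        · exact absurd h (not_lt.mpr (by positivity))
      · exact (volume_dcube_pos R₀).ne'
    exact this (le_antisymm hlow (zero_le))
  have hst : s ≠ ∞ := (lt_of_le_of_lt heLp_le ENNReal.one_lt_top).ne
  set sr := s.toReal with hsrdef
  have hsr_pos : 0 < sr := ENNReal.toReal_pos hs0 hst
  have hsr_le1 : sr ≤ 1 := by
    have := ENNReal.toReal_mono (by norm_num : (1:ℝ≥0∞) ≠ ⊤) heLp_le
    simpa using this
  have hsrinv : 1 ≤ sr⁻¹ := (one_le_inv₀ hsr_pos).mpr hsr_le1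
  set f' : ∀ Q, X Q := fun Q => sr⁻¹ • f Q with hf'def
  have hNXf' : ∀ x, NX f' x = ENNReal.ofReal sr⁻¹ * NX f x := by
    intro x
    rw [NX, NX, ENNReal.mul_iSup]
    apply iSup_congr
    intro Q
    rw [ENNReal.mul_iSup]
    apply iSup_congr
    intro hx
    simp only [hf'def]
    rw [← ofReal_norm_eq_coe_nnnorm, ← ofReal_norm_eq_coe_nnnorm, norm_smul,
      Real.norm_of_nonneg (by positivity : (0:ℝ) ≤ sr⁻¹),
      ENNReal.ofReal_mul (by positivity : (0:ℝ) ≤ sr⁻¹)]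
  have heLpf' : eLp p (NX f') volume = 1 := by
    have h1 : eLp p (NX f') volume = ENNReal.ofReal sr⁻¹ * s := by
      rw [hsdef]
      rw [show NX f' = fun x => ENNReal.ofReal sr⁻¹ * NX f x from funext hNXf']
      exact eLp_const_mul hp0 hptop ENNReal.ofReal_ne_top (NX f) volume
    rw [h1]
    have h2 : ENNReal.ofReal sr⁻¹ = s⁻¹ := by
      rw [ENNReal.ofReal_inv_of_pos hsr_pos, hsrdef, ENNReal.ofReal_toReal hst]
    rw [h2, ENNReal.inv_mul_cancel hs0 hst]
  -- the pairing sum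
  have hf'zero : ∀ Q ∉ F, f' Q = 0 := by
    intro Q hQ
    simp only [hf'def, hfdef]
    rw [dif_neg (by tauto)]
    simp
  have hsum_eq : ∑' Q, (pair Q) (f' Q) (g Q) = ∑ Q ∈ F, (pair Q) (f' Q) (g Q) := by
    apply tsum_eq_sum
    intro Q hQ
    rw [hf'zero Q hQ]
    simp
  have hterm_ge : ∀ Q ∈ F, (0:ℝ) ≤ (pair Q) (f' Q) (g Q) ∧
      a Q * (‖g Q‖₊ : ℝ≥0∞) ≤ ENNReal.ofReal (2*C₀) *
        ENNReal.ofReal ((pair Q) (f' Q) (g Q)) := by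
    intro Q hQF
    by_cases h : a Q ≠ 0 ∧ g Q ≠ 0 ∧ Q ∈ F
    · have hval : (pair Q) (f' Q) (g Q) = sr⁻¹ * ((a Q).toReal * (pair Q) (u Q) (g Q)) := by
        simp only [hf'def, hfdef]
        rw [dif_pos h]
        rw [_root_.map_smul, _root_.map_smul, LinearMap.smul_apply, LinearMap.smul_apply]
        simp [mul_assoc]
      have hpair_ge : ‖g Q‖ / (2*C₀) ≤ (pair Q) (u Q) (g Q) := (hu Q h).2
      have hgpos : 0 < ‖g Q‖ := norm_pos_iff.mpr h.2.1
      have haQpos : 0 < (a Q).toReal := ENNReal.toReal_pos h.1 (ha Q)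
      have hge0 : (0:ℝ) ≤ (pair Q) (f' Q) (g Q) := by
        rw [hval]
        have h1 : (0:ℝ) ≤ ‖g Q‖ / (2*C₀) := by positivity
        have := h1.trans hpair_ge
        positivity
      refine ⟨hge0, ?_⟩
      have hreal : (a Q).toReal * ‖g Q‖ ≤ (2*C₀) * ((pair Q) (f' Q) (g Q)) := by
        rw [hval]
        have h1 : (a Q).toReal * (‖g Q‖ / (2*C₀)) ≤ (a Q).toReal * ((pair Q) (u Q) (g Q)) :=
          mul_le_mul_of_nonneg_left hpair_ge haQpos.le
        have h2 : (a Q).toReal * ((pair Q) (u Q) (g Q)) ≤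
            sr⁻¹ * ((a Q).toReal * ((pair Q) (u Q) (g Q))) := by
          have hnn : 0 ≤ (a Q).toReal * ((pair Q) (u Q) (g Q)) := by
            have h1' : (0:ℝ) ≤ ‖g Q‖ / (2*C₀) := by positivity
            have := h1'.trans hpair_ge
            positivity
          nlinarith [hsrinv]
        calc (a Q).toReal * ‖g Q‖ = (2*C₀) * ((a Q).toReal * (‖g Q‖ / (2*C₀))) := by
              field_simp
            _ ≤ (2*C₀) * (sr⁻¹ * ((a Q).toReal * ((pair Q) (u Q) (g Q)))) := by
              have := h1.trans h2
              nlinarith [this, hC₀]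
      calc a Q * (‖g Q‖₊ : ℝ≥0∞)
          = ENNReal.ofReal ((a Q).toReal * ‖g Q‖) := by
            rw [ENNReal.ofReal_mul ENNReal.toReal_nonneg, ENNReal.ofReal_toReal (ha Q),
              ofReal_norm_eq_coe_nnnorm]
        _ ≤ ENNReal.ofReal ((2*C₀) * ((pair Q) (f' Q) (g Q))) := ENNReal.ofReal_le_ofReal hreal
        _ = ENNReal.ofReal (2*C₀) * ENNReal.ofReal ((pair Q) (f' Q) (g Q)) :=
            ENNReal.ofReal_mul (by positivity)
    · have hf0 : f' Q = 0 := by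
        simp only [hf'def, hfdef]
        rw [dif_neg h]
        simp
      have hzero : a Q * (‖g Q‖₊ : ℝ≥0∞) = 0 := by
        push_neg at h
        by_cases h1 : a Q = 0
        · rw [h1, zero_mul]
        by_cases h2 : g Q = 0
        · rw [h2]; simp
        · exact absurd hQF (h h1 h2)
      refine ⟨by rw [hf0]; simp, ?_⟩
      rw [hzero]
      exact zero_le
  calc ∑ R ∈ F, a R * (‖g R‖₊ : ℝ≥0∞)
      ≤ ∑ R ∈ F, ENNReal.ofReal (2*C₀) * ENNReal.ofReal ((pair R) (f' R) (g R)) :=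
        Finset.sum_le_sum (fun R hR => (hterm_ge R hR).2)
    _ = ENNReal.ofReal (2*C₀) * ∑ R ∈ F, ENNReal.ofReal ((pair R) (f' R) (g R)) := by
        rw [Finset.mul_sum]
    _ = ENNReal.ofReal (2*C₀) * ENNReal.ofReal (∑ R ∈ F, (pair R) (f' R) (g R)) := by
        rw [ENNReal.ofReal_sum_of_nonneg (fun R hR => (hterm_ge R hR).1)]
    _ = ENNReal.ofReal (2*C₀) * ENNReal.ofReal (∑' Q, (pair Q) (f' Q) (g Q)) := by
        rw [hsum_eq]
    _ ≤ ENNReal.ofReal (2*C₀) *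
        ⨆ (f'' : ∀ Q, X Q) (_ : eLp p (NX f'') volume = 1),
          ENNReal.ofReal (∑' Q, pair Q (f'' Q) (g Q)) := by
        apply mul_le_mul_right
        exact le_iSup₂ (f := fun (f'' : ∀ Q, X Q) (_ : eLp p (NX f'') volume = 1) =>
          ENNReal.ofReal (∑' Q, pair Q (f'' Q) (g Q))) f' heLpf'

-- ===== finite approximation =====

lemma rpow_iSup {qr : ℝ} (hqr : 0 < qr) (z : ℕ → ℝ≥0∞) :
    (⨆ i, z i) ^ qr = ⨆ i, (z i) ^ qr := by
  apply le_antisymm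
  · have hz : ∀ i, z i ≤ ((⨆ j, (z j) ^ qr) ^ qr⁻¹) := by
      intro i
      calc z i = ((z i) ^ qr) ^ qr⁻¹ := by
            rw [← ENNReal.rpow_mul, mul_inv_cancel₀ hqr.ne', ENNReal.rpow_one]
        _ ≤ _ := ENNReal.rpow_le_rpow (le_iSup (fun j => (z j) ^ qr) i) (by positivity)
    calc (⨆ i, z i) ^ qr ≤ (((⨆ j, (z j) ^ qr) ^ qr⁻¹)) ^ qr :=
          ENNReal.rpow_le_rpow (iSup_le hz) hqr.le
      _ = ⨆ j, (z j) ^ qr := by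
          rw [← ENNReal.rpow_mul, inv_mul_cancel₀ hqr.ne', ENNReal.rpow_one]
  · exact iSup_le fun i => ENNReal.rpow_le_rpow (le_iSup z i) hqr.le

lemma Cfun_mono {n : ℕ} {b b' : DIdx n → ℝ≥0∞} (h : ∀ R, b R ≤ b' R) (x : EuclideanSpace ℝ (Fin n)) :
    Cfun n b x ≤ Cfun n b' x := by
  apply iSup₂_mono
  intro Q _
  exact mul_le_mul_right
    (ENNReal.tsum_le_tsum (fun (R : {R : DIdx n // dcube n R ⊆ dcube n Q}) => h R.1)) _

lemma cfun_eLp_sup {n : ℕ} {qr : ℝ} (hqr : 0 < qr) (b : DIdx n → ℝ≥0∞) {L : ℝ≥0∞}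
    (h : ∀ F : Finset (DIdx n),
      (∫⁻ x, (Cfun n (fun R => if R ∈ F then b R else 0) x) ^ qr) ^ qr⁻¹ ≤ L) :
    (∫⁻ x, (Cfun n b x) ^ qr) ^ qr⁻¹ ≤ L := by
  classical
  obtain ⟨e, he⟩ := exists_surjective_nat (DIdx n)
  set bb : ℕ → DIdx n → ℝ≥0∞ :=
    fun i R => if R ∈ (Finset.range i).image e then b R else 0 with hbbdef
  have hbbmono : ∀ R, Monotone (fun i => bb i R) := by
    intro R i j hij
    simp only [hbbdef]
    by_cases hR : R ∈ (Finset.range i).image e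
    · rw [if_pos hR, if_pos (Finset.image_subset_image (Finset.range_subset_range.mpr hij) hR)]
    · rw [if_neg hR]; exact zero_le
  have hbble : ∀ i R, bb i R ≤ b R := by
    intro i R
    simp only [hbbdef]
    split <;> simp
  have hbbsup : ∀ R, (⨆ i, bb i R) = b R := by
    intro R
    apply le_antisymm
    · exact iSup_le (fun i => hbble i R)
    · obtain ⟨j, hj⟩ := he R
      refine le_iSup_of_le (j+1) ?_
      simp only [hbbdef]
      rw [if_pos (Finset.mem_image.mpr ⟨j, Finset.mem_range.mpr (by omega), hj⟩)]
  have htsup : ∀ Q : DIdx n, (∑' R : {R : DIdx n // dcube n R ⊆ dcube n Q}, b R.1)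
      = ⨆ i, ∑' R : {R : DIdx n // dcube n R ⊆ dcube n Q}, bb i R.1 := by
    intro Q
    apply le_antisymm
    · rw [ENNReal.tsum_eq_iSup_sum]
      apply iSup_le
      intro sf
      calc ∑ r ∈ sf, b r.1 = ∑ r ∈ sf, ⨆ i, bb i r.1 :=
            Finset.sum_congr rfl
              (fun (r : {R : DIdx n // dcube n R ⊆ dcube n Q}) _ => (hbbsup r.1).symm)
        _ = ⨆ i, ∑ r ∈ sf, bb i r.1 :=
            ENNReal.finsetSum_iSup_of_monotone
              (fun (r : {R : DIdx n // dcube n R ⊆ dcube n Q}) => hbbmono r.1)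
        _ ≤ ⨆ i, ∑' R : {R : DIdx n // dcube n R ⊆ dcube n Q}, bb i R.1 :=
            iSup_mono (fun i => ENNReal.sum_le_tsum sf)
    · exact iSup_le fun i => ENNReal.tsum_le_tsum (fun R => hbble i R.1)
  have hCsup : ∀ x, Cfun n b x = ⨆ i, Cfun n (bb i) x := by
    intro x
    have hAs : ∀ Q : DIdx n, Afun n b Q = ⨆ i, Afun n (bb i) Q := by
      intro Q
      rw [Afun, htsup Q, ENNReal.mul_iSup]
      exact iSup_congr fun i => rfl
    calc Cfun n b x
        = ⨆ Q, ⨆ (_ : x ∈ dcube n Q), ⨆ i, Afun n (bb i) Q := by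
          rw [Cfun]
          exact iSup_congr fun Q => iSup_congr fun _ => hAs Q
      _ = ⨆ Q, ⨆ i, ⨆ (_ : x ∈ dcube n Q), Afun n (bb i) Q := by
          apply iSup_congr
          intro Q
          exact iSup_comm
      _ = ⨆ i, ⨆ Q, ⨆ (_ : x ∈ dcube n Q), Afun n (bb i) Q := iSup_comm
      _ = ⨆ i, Cfun n (bb i) x := rfl
  have hint : (∫⁻ x, (Cfun n b x) ^ qr) = ⨆ i, ∫⁻ x, (Cfun n (bb i) x) ^ qr := by
    calc (∫⁻ x, (Cfun n b x) ^ qr) = ∫⁻ x, ⨆ i, (Cfun n (bb i) x) ^ qr := by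
          apply lintegral_congr
          intro x
          rw [hCsup x, rpow_iSup hqr]
      _ = ⨆ i, ∫⁻ x, (Cfun n (bb i) x) ^ qr := by
          apply lintegral_iSup
          · exact fun i => (measurable_Cfun (bb i)).pow_const qr
          · intro i j hij x
            exact ENNReal.rpow_le_rpow (Cfun_mono (fun R => hbbmono R hij) x) hqr.le
  have hle : (∫⁻ x, (Cfun n b x) ^ qr) ≤ L ^ qr := by
    rw [hint]
    apply iSup_le
    intro i
    have hi := h ((Finset.range i).image e)
    calc (∫⁻ x, (Cfun n (bb i) x) ^ qr)
        = (((∫⁻ x, (Cfun n (bb i) x) ^ qr)) ^ qr⁻¹) ^ qr := by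
          rw [← ENNReal.rpow_mul, inv_mul_cancel₀ hqr.ne', ENNReal.rpow_one]
      _ ≤ L ^ qr := ENNReal.rpow_le_rpow hi hqr.le
  calc (∫⁻ x, (Cfun n b x) ^ qr) ^ qr⁻¹
      ≤ (L ^ qr) ^ qr⁻¹ := ENNReal.rpow_le_rpow hle (by positivity)
    _ = L := by rw [← ENNReal.rpow_mul, mul_inv_cancel₀ hqr.ne', ENNReal.rpow_one]

-- ===== n = 0 facts =====

lemma dcube_zero (Q : DIdx 0) : dcube 0 Q = Set.univ := by
  ext x
  simp [dcube]

lemma volume_univ_zero : volume (Set.univ : Set (EuclideanSpace ℝ (Fin 0))) = 1 := by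
  have h := volume_dcube (n := 0) ((0 : ℤ), fun i => (0:ℤ))
  rw [dcube_zero] at h
  simpa using h

-- ===== sigma as ofReal =====

lemma sigma_eq_ofReal {e : ℝ} (he : 0 < e) :
    (1 - t2 (-e))⁻¹ = ENNReal.ofReal ((1 - (2:ℝ)^(-e))⁻¹) := by
  have hpos : (0:ℝ) < (2:ℝ)^(-e) := by positivity
  have h2 : t2 (-e) = ENNReal.ofReal ((2:ℝ)^(-e)) := by
    rw [t2, show ((2:ℝ≥0∞)) = ENNReal.ofReal 2 by norm_num,
      ENNReal.ofReal_rpow_of_pos (by norm_num)]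
  have hlt : (2:ℝ)^(-e) < 1 :=
    Real.rpow_lt_one_of_one_lt_of_neg (by norm_num) (by linarith)
  rw [h2, ← ENNReal.ofReal_one, ← ENNReal.ofReal_sub _ hpos.le,
    ← ENNReal.ofReal_inv_of_pos (by linarith)]

end S2

/-- Theorem 2.2(iii): `‖C_Y g‖_{p'} ≤ C sup { ∑_Q ⟨f_Q, g_Q⟩ : ‖N_X f‖_p = 1 }`, with `C`
depending only on `p`, `n` and the uniform duality constant `C₀`. -/
theorem stmt2 (n : ℕ) (p p' : ℝ≥0∞) (hp1 : 1 ≤ p) (hptop : p ≠ ∞)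
    (hconj : 1/p + 1/p' = 1) (C₀ : ℝ) (hC₀ : 0 < C₀) :
    ∃ C : ℝ, 0 < C ∧
      ∀ (X Y : DIdx n → Type)
        [∀ Q, NormedAddCommGroup (X Q)] [∀ Q, NormedSpace ℝ (X Q)]
        [∀ Q, CompleteSpace (X Q)]
        [∀ Q, NormedAddCommGroup (Y Q)] [∀ Q, NormedSpace ℝ (Y Q)]
        [∀ Q, CompleteSpace (Y Q)]
        (pair : ∀ Q, X Q →ₗ[ℝ] Y Q →ₗ[ℝ] ℝ),
        (∀ Q, IsDuality (pair Q) C₀) →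
        ∀ g : ∀ Q, Y Q,
          eLp p' (CY g) volume ≤
            ENNReal.ofReal C *
              ⨆ (f : ∀ Q, X Q) (_ : eLp p (NX f) volume = 1),
                ENNReal.ofReal (∑' Q, pair Q (f Q) (g Q)) := by
  classical
  have hqr0ge : (0:ℝ) ≤ p'.toReal := ENNReal.toReal_nonneg
  set qr : ℝ := p'.toReal with hqrdef
  set sR : ℝ := (1 - (2:ℝ) ^ (-(qr - 1)))⁻¹ with hsRdef
  refine ⟨2*C₀*(1 + 2*max sR 0), by nlinarith [le_max_right sR 0], ?_⟩
  intro X Y _ _ _ _ _ _ pair hdual g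
  set SS := ⨆ (f : ∀ Q, X Q) (_ : eLp p (NX f) volume = 1),
    ENNReal.ofReal (∑' Q, pair Q (f Q) (g Q)) with hSS
  have hCge : ENNReal.ofReal (2*C₀) ≤ ENNReal.ofReal (2*C₀*(1 + 2*max sR 0)) := by
    apply ENNReal.ofReal_le_ofReal
    nlinarith [le_max_right sR 0]
  by_cases hp_eq : p = 1
  · -- CASE p = 1, p' = ∞
    have hp' : p' = ∞ := by
      rw [hp_eq] at hconj
      have h1 : (1:ℝ≥0∞) + 1/p' = 1 := by simpa using hconj
      have h2 : (1:ℝ≥0∞) + 1/p' = 1 + 0 := by rw [add_zero]; exact h1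
      have h3 : 1/p' = 0 := (ENNReal.add_right_inj (by norm_num)).mp h2
      rwa [one_div, ENNReal.inv_eq_zero] at h3
    rw [hp', eLp, if_pos rfl]
    have hbd : ∀ Q : DIdx n, S2.Afun n (fun R => (‖g R‖₊ : ℝ≥0∞)) Q
        ≤ ENNReal.ofReal (2*C₀) * SS := by
      intro Q
      rw [S2.Afun, ENNReal.tsum_eq_iSup_sum, ENNReal.mul_iSup]
      apply iSup_le
      intro sf
      set F : Finset (DIdx n) := sf.image Subtype.val with hFdef
      set aw : DIdx n → ℝ≥0∞ := fun R => if R ∈ F then (volume (dcube n Q))⁻¹ else 0 with hawdef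
      have haw_top : ∀ R, aw R ≠ ∞ := by
        intro R
        simp only [hawdef]
        split
        · exact ENNReal.inv_ne_top.mpr (S2.volume_dcube_pos Q).ne'
        · exact ENNReal.zero_ne_top
      have hNle : ∀ x, S2.NN n aw x ≤
          (dcube n Q).indicator (fun _ => (volume (dcube n Q))⁻¹) x := by
        intro x
        apply iSup₂_le
        intro R hx
        simp only [hawdef]
        split
        case isTrue hRF =>
          have hsub : dcube n R ⊆ dcube n Q := by
            rw [hFdef] at hRF
            obtain ⟨r, hr, hval⟩ := Finset.mem_image.mp hRF
            exact hval ▸ r.2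
          rw [Set.indicator_of_mem (hsub hx)]
        case isFalse _ => exact zero_le
      have hNaw : eLp p (S2.NN n aw) volume ≤ 1 := by
        rw [eLp, if_neg hptop, hp_eq]
        have h1 : (∫⁻ x, S2.NN n aw x ^ (1:ℝ≥0∞).toReal) ≤ 1 := by
          simp only [ENNReal.toReal_one, ENNReal.rpow_one]
          calc ∫⁻ x, S2.NN n aw x
              ≤ ∫⁻ x, (dcube n Q).indicator (fun _ => (volume (dcube n Q))⁻¹) x :=
                lintegral_mono hNle
            _ = (volume (dcube n Q))⁻¹ * volume (dcube n Q) := by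
                rw [lintegral_indicator (S2.measurableSet_dcube Q)]
                simp
            _ = 1 := ENNReal.inv_mul_cancel (S2.volume_dcube_pos Q).ne'
                (S2.volume_dcube_ne_top Q)
        calc (∫⁻ x, S2.NN n aw x ^ (1:ℝ≥0∞).toReal) ^ (1:ℝ≥0∞).toReal⁻¹
            ≤ 1 ^ (1:ℝ≥0∞).toReal⁻¹ := ENNReal.rpow_le_rpow h1 (by positivity)
          _ = 1 := ENNReal.one_rpow _
      have htr := S2.transfer hp1 hptop hC₀ X Y pair hdual g aw haw_top F hNaw
      rw [← hSS] at htr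
      have hsum : ∑ R ∈ F, aw R * (‖g R‖₊:ℝ≥0∞)
          = (volume (dcube n Q))⁻¹ * ∑ r ∈ sf, (‖g r.1‖₊:ℝ≥0∞) := by
        rw [Finset.mul_sum, hFdef, Finset.sum_image (fun x _ y _ h => Subtype.ext h)]
        apply Finset.sum_congr rfl
        intro r hr
        have hmem : r.1 ∈ F := by
          rw [hFdef]
          exact Finset.mem_image_of_mem _ hr
        simp only [hawdef]
        rw [if_pos hmem]
      rw [← hsum]
      exact htr
    have hess : essSup (CY g) volume ≤ ENNReal.ofReal (2*C₀) * SS := by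
      refine essSup_le_of_ae_le _ ?_
      apply Filter.Eventually.of_forall
      intro x
      exact iSup₂_le (fun Q _ => hbd Q)
    exact le_trans hess (mul_le_mul_left hCge _)
  · -- CASE 1 < p
    have hp_gt : 1 < p := lt_of_le_of_ne hp1 (Ne.symm hp_eq)
    have hp0 : p ≠ 0 := fun h => by rw [h] at hp1; exact absurd hp1 (by norm_num)
    have hp'top : p' ≠ ∞ := by
      intro h
      rw [h] at hconj
      simp only [one_div, ENNReal.inv_top, add_zero] at hconj
      rw [ENNReal.inv_eq_one] at hconj
      exact hp_eq hconj
    have hp'0 : p' ≠ 0 := by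
      intro h
      rw [h] at hconj
      simp at hconj
    set pr : ℝ := p.toReal with hprdef
    have hpr1 : 1 < pr := by
      have h1 := ENNReal.toReal_strict_mono hptop hp_gt
      simpa using h1
    have hpr0 : (0:ℝ) < pr := by linarith
    have hqr0 : (0:ℝ) < qr := by
      rw [hqrdef]
      exact ENNReal.toReal_pos hp'0 hp'top
    have hconjr : pr⁻¹ + qr⁻¹ = 1 := by
      have hce : (1/p).toReal + (1/p').toReal = 1 := by
        rw [← ENNReal.toReal_add]
        · rw [hconj]; simp
        · rw [one_div]
          exact ENNReal.inv_ne_top.mpr hp0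
        · rw [one_div]
          exact ENNReal.inv_ne_top.mpr hp'0
      simpa [one_div, ENNReal.toReal_inv, hprdef, hqrdef] using hce
    have hqr1 : 1 < qr := by
      have h1 : (0:ℝ) < pr⁻¹ := by positivity
      have h2 : qr⁻¹ < 1 := by linarith
      have h3 := mul_lt_mul_of_pos_left h2 hqr0
      rwa [mul_inv_cancel₀ hqr0.ne', mul_one] at h3
    have hconj' : (qr - 1) * pr = qr := by
      have hch : qr + pr = pr * qr := by
        field_simp at hconjr
        linarith [hconjr]
      nlinarith [hch]
    rw [eLp, if_neg hp'top]
    by_cases hn : n = 0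
    · -- n = 0
      subst hn
      have hCYconst : ∀ x, CY g x = ∑' R : DIdx 0, (‖g R‖₊ : ℝ≥0∞) := by
        intro x
        have h1 : ∀ Q : DIdx 0, (volume (dcube 0 Q))⁻¹ *
            (∑' R : {R : DIdx 0 // dcube 0 R ⊆ dcube 0 Q}, (‖g R.1‖₊:ℝ≥0∞))
            = ∑' R : DIdx 0, (‖g R‖₊:ℝ≥0∞) := by
          intro Q
          have hv : volume (dcube 0 Q) = 1 := by
            rw [S2.dcube_zero, S2.volume_univ_zero]
          have hall : ∀ R : DIdx 0, dcube 0 R ⊆ dcube 0 Q := by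
            intro R
            rw [S2.dcube_zero, S2.dcube_zero]
          have he := (Equiv.subtypeUnivEquiv hall).tsum_eq
            (fun R : DIdx 0 => (‖g R‖₊ : ℝ≥0∞))
          rw [hv, inv_one, one_mul]
          exact he
        apply le_antisymm
        · exact iSup₂_le (fun Q _ => le_of_eq (h1 Q))
        · have hx : x ∈ dcube 0 ((0:ℤ), fun i => (0:ℤ)) := by
            rw [S2.dcube_zero]
            exact Set.mem_univ x
          refine le_trans (le_of_eq (h1 ((0:ℤ), fun i => (0:ℤ))).symm) ?_
          exact le_iSup₂ (f := fun (Q : DIdx 0) (_ : x ∈ dcube 0 Q) =>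
            (volume (dcube 0 Q))⁻¹ *
              ∑' R : {R : DIdx 0 // dcube 0 R ⊆ dcube 0 Q}, (‖g R.1‖₊:ℝ≥0∞)) _ hx
      have hLHS : (∫⁻ x, CY g x ^ qr) ^ qr⁻¹ = ∑' R : DIdx 0, (‖g R‖₊ : ℝ≥0∞) := by
        rw [lintegral_congr (fun x => by rw [hCYconst x])]
        rw [lintegral_const, S2.volume_univ_zero, mul_one, ← ENNReal.rpow_mul,
          mul_inv_cancel₀ hqr0.ne', ENNReal.rpow_one]
      rw [hLHS, ENNReal.tsum_eq_iSup_sum]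
      apply iSup_le
      intro F
      set aw : DIdx 0 → ℝ≥0∞ := fun R => if R ∈ F then 1 else 0 with hawdef
      have haw_top : ∀ R, aw R ≠ ∞ := fun R => by
        simp only [hawdef]
        split <;> simp
      have hNle : ∀ x, S2.NN 0 aw x ≤ 1 := by
        intro x
        apply iSup₂_le
        intro R _
        simp only [hawdef]
        split <;> simp
      have hNaw : eLp p (S2.NN 0 aw) volume ≤ 1 := by
        rw [eLp, if_neg hptop]
        have h1 : (∫⁻ x, S2.NN 0 aw x ^ p.toReal) ≤ 1 := by
          calc (∫⁻ x, S2.NN 0 aw x ^ p.toReal)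
              ≤ ∫⁻ (_ : EuclideanSpace ℝ (Fin 0)), 1 := by
                apply lintegral_mono
                intro x
                calc S2.NN 0 aw x ^ p.toReal ≤ 1 ^ p.toReal :=
                      ENNReal.rpow_le_rpow (hNle x) (by positivity)
                  _ = 1 := ENNReal.one_rpow _
            _ = 1 := by rw [lintegral_one, S2.volume_univ_zero]
        calc (∫⁻ x, S2.NN 0 aw x ^ p.toReal) ^ p.toReal⁻¹ ≤ 1 ^ p.toReal⁻¹ :=
              ENNReal.rpow_le_rpow h1 (by positivity)
          _ = 1 := ENNReal.one_rpow _
      have htr := S2.transfer hp1 hptop hC₀ X Y pair hdual g aw haw_top F hNaw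
      rw [← hSS] at htr
      have hsum : ∑ R ∈ F, aw R * (‖g R‖₊:ℝ≥0∞) = ∑ R ∈ F, (‖g R‖₊:ℝ≥0∞) := by
        apply Finset.sum_congr rfl
        intro R hR
        simp only [hawdef]
        rw [if_pos hR, one_mul]
      rw [hsum] at htr
      exact le_trans htr (mul_le_mul_left hCge _)
    · -- main branch : n ≥ 1
      have hn1 : 1 ≤ n := by omega
      show (∫⁻ x, (S2.Cfun n (fun R => (‖g R‖₊ : ℝ≥0∞)) x) ^ qr) ^ qr⁻¹ ≤ _
      refine S2.cfun_eLp_sup hqr0 _ (fun F => ?_)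
      obtain ⟨a, hatop, hN, hC⟩ := S2.core hn1 hpr1 hqr1 hconj' hconjr
        (fun R => if R ∈ F then (‖g R‖₊:ℝ≥0∞) else 0) F
        (fun R hR => by simp [hR])
        (fun R => by by_cases h : R ∈ F <;> simp [h])
      have hNa : eLp p (S2.NN n a) volume ≤ 1 := by
        rw [eLp, if_neg hptop]
        exact hN
      have htr := S2.transfer hp1 hptop hC₀ X Y pair hdual g a hatop F hNa
      rw [← hSS] at htr
      have hsum : (∑' R, a R * (if R ∈ F then (‖g R‖₊:ℝ≥0∞) else 0))
          = ∑ R ∈ F, a R * (‖g R‖₊:ℝ≥0∞) := by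
        rw [tsum_eq_sum (s := F) (fun R hR => by rw [if_neg hR, mul_zero])]
        apply Finset.sum_congr rfl
        intro R hR
        rw [if_pos hR]
      have hσof : (1 - S2.t2 (-(qr-1)))⁻¹ = ENNReal.ofReal sR := by
        rw [hsRdef]
        exact S2.sigma_eq_ofReal (by linarith)
      have hsR0 : 0 ≤ sR := by
        rw [hsRdef]
        have h2 : (2:ℝ)^(-(qr-1)) < 1 :=
          Real.rpow_lt_one_of_one_lt_of_neg (by norm_num) (by linarith)
        have : (0:ℝ) < 1 - (2:ℝ)^(-(qr-1)) := by linarith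
        positivity
      calc (∫⁻ x, (S2.Cfun n (fun R => if R ∈ F then (‖g R‖₊:ℝ≥0∞) else 0) x) ^ qr) ^ qr⁻¹
          ≤ 2 * (1 - S2.t2 (-(qr-1)))⁻¹ *
            ∑' R, a R * (if R ∈ F then (‖g R‖₊:ℝ≥0∞) else 0) := hC
        _ = 2 * ENNReal.ofReal sR * ∑ R ∈ F, a R * (‖g R‖₊:ℝ≥0∞) := by
            rw [hσof, hsum]
        _ ≤ 2 * ENNReal.ofReal sR * (ENNReal.ofReal (2*C₀) * SS) :=
            mul_le_mul_right htr _
        _ = (2 * ENNReal.ofReal sR * ENNReal.ofReal (2*C₀)) * SS := by ring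
        _ ≤ ENNReal.ofReal (2*C₀*(1+2*max sR 0)) * SS := by
            apply mul_le_mul_left
            calc 2 * ENNReal.ofReal sR * ENNReal.ofReal (2*C₀)
                = ENNReal.ofReal (2 * sR * (2*C₀)) := by
                  rw [ENNReal.ofReal_mul (by positivity : (0:ℝ) ≤ 2*sR),
                    ENNReal.ofReal_mul (by norm_num : (0:ℝ) ≤ 2),
                    ENNReal.ofReal_mul (by norm_num : (0:ℝ) ≤ 2)]
                  norm_num
              _ ≤ _ := ENNReal.ofReal_le_ofReal (by nlinarith [le_max_left sR 0])


end
end
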